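/- arXiv:math/0001003 — 6 statements merged into one kernel-verified Lean document; each statement's English description precedes it below -/
import Mathlib

section
/- With p_n(q) defined as the sum over compositions of n as above, the coefficient of q^1 in p_n(q) equals 2^n − n − 1 for all n ≥ 1. -/
open Polynomial Finset



noncomputable def gP (s : ℕ) : Polynomial ℚ :=
  (X - 1) ^ (s - 1) * C ((s.factorial : ℚ)⁻¹)

noncomputable def AP (l n : ℕ) : Polynomial ℚ :=
  ∑ s ∈ (Finset.Nat.antidiagonalTuple l n).filter (fun s => ∀ i, 1 ≤ s i), ∏ i, gP (s i)

noncomputable def BP : ℕ → Polynomial ℚ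
  | 0 => 1
  | (n+1) => ∑ l ∈ Finset.Icc 1 (n+1), AP l (n+1)

lemma AP_one (n : ℕ) (hn : 1 ≤ n) : AP 1 n = gP n := by
  rw [AP, Finset.Nat.antidiagonalTuple_one, Finset.filter_singleton]
  simp only [Matrix.cons_val_fin_one]
  rw [if_pos (fun i => hn)]
  simp [Fin.prod_univ_one]

lemma AP_eq_zero {l m : ℕ} (h : m < l) : AP l m = 0 := by
  rw [AP, Finset.sum_eq_zero]
  intro s hs
  simp only [Finset.mem_filter, Finset.Nat.mem_antidiagonalTuple] at hs
  exfalso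
  have : (l : ℕ) ≤ m := by
    calc l = ∑ _i : Fin l, 1 := by simp
    _ ≤ ∑ i, s i := Finset.sum_le_sum fun i _ => hs.2 i
    _ = m := hs.1
  omega

lemma AP_succ (l n : ℕ) :
    AP (l+1) n = ∑ k ∈ Icc 1 n, gP k * AP l (n - k) := by
  rw [AP]
  simp only [AP, Finset.mul_sum]
  rw [Finset.sum_sigma']
  refine Finset.sum_bij' (fun s _ => ⟨s 0, Fin.tail s⟩)
    (fun p _ => Fin.cons p.1 p.2) ?_ ?_ ?_ ?_ ?_
  · intro s hs
    simp only [Finset.mem_filter, Finset.Nat.mem_antidiagonalTuple] at hs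
    obtain ⟨hsum, hpos⟩ := hs
    rw [Fin.sum_univ_succ] at hsum
    simp only [Finset.mem_sigma, Finset.mem_Icc, Finset.mem_filter,
      Finset.Nat.mem_antidiagonalTuple]
    refine ⟨⟨hpos 0, ?_⟩, ?_, fun i => hpos i.succ⟩
    · omega
    · simp only [Fin.tail]; omega
  · intro p hp
    simp only [Finset.mem_sigma, Finset.mem_Icc, Finset.mem_filter,
      Finset.Nat.mem_antidiagonalTuple] at hp
    obtain ⟨⟨h1, h2⟩, hsum, hpos⟩ := hp
    simp only [Finset.mem_filter, Finset.Nat.mem_antidiagonalTuple]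
    constructor
    · rw [Fin.sum_univ_succ]
      simp only [Fin.cons_zero, Fin.cons_succ]
      omega
    · intro i
      refine Fin.cases ?_ ?_ i
      · simpa using h1
      · intro j; simpa using hpos j
  · intro s _; exact Fin.cons_self_tail s
  · intro p _; simp [Fin.cons_zero, Fin.tail_cons]
  · intro s _
    rw [Fin.prod_univ_succ]
    simp [Fin.tail]

lemma BP_eq (n : ℕ) (hn : 1 ≤ n) : BP n = ∑ l ∈ Finset.Icc 1 n, AP l n := by
  cases n with
  | zero => omega
  | succ m => rfl

lemma sumIcc_eq_range (M r : ℕ) :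
    ∑ l ∈ Finset.Icc 1 M, AP l r = ∑ i ∈ Finset.range M, AP (i+1) r := by
  rw [← Finset.Ico_add_one_right_eq_Icc, Finset.sum_Ico_eq_sum_range]
  simp [add_comm 1]

lemma range_sum_eq_BP {M r : ℕ} (h1 : 1 ≤ r) (h2 : r ≤ M) :
    ∑ i ∈ Finset.range M, AP (i+1) r = BP r := by
  rw [BP_eq r h1, sumIcc_eq_range]
  symm
  apply Finset.sum_subset
  · exact Finset.range_subset_range.2 h2
  · intro i _ hi
    simp only [Finset.mem_range, not_lt] at hi
    exact AP_eq_zero (by omega)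

lemma BP_rec (n : ℕ) (hn : 1 ≤ n) :
    BP n = ∑ k ∈ Icc 1 n, gP k * BP (n - k) := by
  obtain ⟨m, rfl⟩ : ∃ m, n = m + 1 := ⟨n - 1, by omega⟩
  rw [BP_eq _ hn, sumIcc_eq_range, Finset.sum_range_succ']
  have h1 : ∀ i, AP (i + 1 + 1) (m+1) = ∑ k ∈ Icc 1 (m+1), gP k * AP (i+1) (m+1-k) :=
    fun i => AP_succ (i+1) (m+1)
  simp only [h1]
  rw [Finset.sum_comm, AP_one _ hn]
  rw [Finset.sum_Icc_succ_top (by omega : 1 ≤ m + 1),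
      Finset.sum_Icc_succ_top (by omega : 1 ≤ m + 1)]
  have h2 : ∑ i ∈ Finset.range m, gP (m+1) * AP (i+1) (m+1-(m+1)) = 0 := by
    apply Finset.sum_eq_zero
    intro i _
    rw [Nat.sub_self, AP_eq_zero (by omega)]
    ring
  rw [h2, add_zero, Nat.sub_self]
  have h3 : ∀ k ∈ Finset.Icc 1 m,
      ∑ i ∈ Finset.range m, gP k * AP (i+1) (m+1-k) = gP k * BP (m+1-k) := by
    intro k hk
    simp only [Finset.mem_Icc] at hk
    rw [← Finset.mul_sum, range_sum_eq_BP (by omega) (by omega)]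
  rw [Finset.sum_congr rfl h3]
  show _ = _ + gP (m+1) * BP 0
  rw [show BP 0 = 1 from rfl, mul_one]


/-- `p_n(q) = n! ∑_{l=1}^{n} ∑_{s_1+…+s_l=n, s_i≥1} ∏_i (q-1)^{s_i-1}/s_i!`. -/
noncomputable def pPoly (n : ℕ) : Polynomial ℚ :=
  (n.factorial : ℚ) •
    ∑ l ∈ Finset.Icc 1 n,
      ∑ s ∈ (Finset.Nat.antidiagonalTuple l n).filter (fun s => ∀ i, 1 ≤ s i),
        ∏ i, ((X - 1) ^ (s i - 1) * C (((s i).factorial : ℚ)⁻¹))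

lemma BP_zero : BP 0 = 1 := rfl


lemma Icc_one_sum_eq {M : Type*} [AddCommMonoid M] (f : ℕ → M) (n : ℕ) :
    ∑ k ∈ Finset.Icc 1 n, f k = ∑ j ∈ Finset.range n, f (j+1) := by
  rw [← Finset.Ico_add_one_right_eq_Icc, Finset.sum_Ico_eq_sum_range]
  simp [add_comm 1]


lemma coeff_zero_gP (j : ℕ) :
    (gP (j+1)).coeff 0 = (-1)^j * (((j+1).factorial : ℚ))⁻¹ := by
  rw [gP, coeff_mul_C]
  congr 1
  have : (X - 1 : Polynomial ℚ) = X + C (-1) := by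
    rw [map_neg, map_one]; ring
  rw [Nat.add_sub_cancel, this, coeff_X_add_C_pow]
  simp

lemma coeff_one_gP (j : ℕ) :
    (gP (j+1)).coeff 1 = -((j:ℚ) * (-1)^j) * (((j+1).factorial : ℚ))⁻¹ := by
  rw [gP, coeff_mul_C]
  congr 1
  have : (X - 1 : Polynomial ℚ) = X + C (-1) := by
    rw [map_neg, map_one]; ring
  rw [Nat.add_sub_cancel, this, coeff_X_add_C_pow, Nat.choose_one_right]
  cases j with
  | zero => simp
  | succ m => rw [Nat.add_sub_cancel, pow_succ]; push_cast; ring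

lemma coeff_one_mul' (p q : Polynomial ℚ) :
    (p*q).coeff 1 = p.coeff 0 * q.coeff 1 + p.coeff 1 * q.coeff 0 := by
  rw [coeff_mul]
  rw [show (1:ℕ) = 0 + 1 from rfl, Finset.Nat.antidiagonal_succ]
  simp [Prod.map]

lemma key (x : ℚ) (n : ℕ) :
    ∑ j ∈ range n, (-1:ℚ)^j * (n.choose (j+1)) * x^(n-(j+1)) = x^n - (x-1)^n := by
  have h := add_pow (-1 : ℚ) x n
  rw [Finset.sum_range_succ'] at h
  have e : ∀ j ∈ range n, (-1:ℚ)^j * (n.choose (j+1)) * x^(n-(j+1)) =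
      -((-1:ℚ)^(j+1) * x^(n-(j+1)) * (n.choose (j+1))) := by
    intro j _; rw [pow_succ]; ring
  rw [Finset.sum_congr rfl e, Finset.sum_neg_distrib]
  have : ((-1 : ℚ) + x) = x - 1 := by ring
  rw [this] at h
  simp only [pow_zero, one_mul, Nat.choose_zero_right, Nat.cast_one, mul_one, Nat.sub_zero] at h
  linarith [h]

lemma id1 (n : ℕ) (hn : 1 ≤ n) : ∑ j ∈ range n, (-1:ℚ)^j * (n.choose (j+1)) = 1 := by
  have h := key 1 n
  simp only [one_pow, mul_one, sub_self] at h
  rw [zero_pow (by omega : n ≠ 0)] at h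
  linarith

lemma id2 (n : ℕ) :
    ∑ j ∈ range n, (-1:ℚ)^j * (n.choose (j+1)) * 2^(n-(j+1)) = 2^n - 1 := by
  have h := key 2 n
  norm_num at h
  convert h using 2


lemma fact_ne (k : ℕ) : ((k.factorial : ℚ)) ≠ 0 :=
  Nat.cast_ne_zero.mpr (Nat.factorial_ne_zero k)

lemma aQ : ∀ n : ℕ, (BP n).coeff 0 = ((n.factorial : ℚ))⁻¹ := by
  intro n
  induction n using Nat.strong_induction_on with
  | _ n ih =>
    match n with
    | 0 => rw [BP_zero]; simp
    | (m+1) =>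
      rw [BP_rec _ (by omega), finset_sum_coeff,
        Icc_one_sum_eq (fun k => (gP k * BP (m+1-k)).coeff 0) (m+1)]
      have step : ∀ j ∈ range (m+1), (gP (j+1) * BP (m+1-(j+1))).coeff 0 =
          (((m+1).factorial : ℚ))⁻¹ * ((-1)^j * ((m+1).choose (j+1))) := by
        intro j hj
        simp only [Finset.mem_range] at hj
        rw [mul_coeff_zero, coeff_zero_gP, ih (m+1-(j+1)) (by omega)]
        rw [Nat.cast_choose ℚ (show j+1 ≤ m+1 by omega)]
        field_simp [fact_ne]
      rw [Finset.sum_congr rfl step, ← Finset.mul_sum, id1 (m+1) (by omega), mul_one]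

lemma bQ : ∀ n : ℕ, (BP n).coeff 1 = (2^n - (n:ℚ) - 1) * ((n.factorial : ℚ))⁻¹ := by
  intro n
  induction n using Nat.strong_induction_on with
  | _ n ih =>
    match n with
    | 0 => rw [BP_zero]; simp [Polynomial.coeff_one]
    | (m+1) =>
      rw [BP_rec _ (by omega), finset_sum_coeff,
        Icc_one_sum_eq (fun k => (gP k * BP (m+1-k)).coeff 1) (m+1)]
      have step : ∀ j ∈ range (m+1), (gP (j+1) * BP (m+1-(j+1))).coeff 1 =
          (((m+1).factorial : ℚ))⁻¹ *
            ((-1)^j * ((m+1).choose (j+1)) * 2^(m+1-(j+1))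
              - ((m:ℚ)+1) * ((-1)^j * ((m+1).choose (j+1)))) := by
        intro j hj
        simp only [Finset.mem_range] at hj
        rw [coeff_one_mul', coeff_zero_gP, coeff_one_gP,
          ih (m+1-(j+1)) (by omega), aQ (m+1-(j+1))]
        rw [Nat.cast_choose ℚ (show j+1 ≤ m+1 by omega)]
        have hM : ((m+1-(j+1) : ℕ) : ℚ) = (m : ℚ) - j := by
          rw [show m+1-(j+1) = m - j by omega, Nat.cast_sub (by omega : j ≤ m)]
        rw [hM]
        field_simp [fact_ne]
        ring
      rw [Finset.sum_congr rfl step, ← Finset.mul_sum]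
      rw [Finset.sum_sub_distrib, ← Finset.mul_sum, id1 (m+1) (by omega), id2 (m+1)]
      push_cast
      ring

/-- The coefficient of `q^1` in `p_n(q)` equals `2^n - n - 1` for all `n ≥ 1`. -/
theorem stmt_2 (n : ℕ) (hn : 1 ≤ n) :
    (pPoly n).coeff 1 = (2 : ℚ) ^ n - n - 1 := by
  have hP : pPoly n = (n.factorial : ℚ) • BP n := by
    rw [BP_eq n hn]; rfl
  rw [hP, Polynomial.coeff_smul, bQ n, smul_eq_mul]
  field_simp [fact_ne]
end

section
/- With p_n(q) as above, p_n(q) is a polynomial of degree n−1 in q whose coefficients are the Eulerian numbers: the coefficient of q^i in p_n(q) equals the number of permutations of {1,...,n} with exactly i descents. -/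
open Polynomial

/-- The number of descents of a permutation `σ` of `Fin n`. -/
noncomputable def descents (n : ℕ) (σ : Equiv.Perm (Fin n)) : ℕ :=
  Nat.card {kk : Fin n // ∃ hk : kk.val + 1 < n, σ ⟨kk.val + 1, hk⟩ < σ kk}

open Finset Equiv
open scoped Classical

variable {n : ℕ}

/-- Descent at natural position `k`. -/
def DesAt (n : ℕ) (σ : Equiv.Perm (Fin n)) (k : ℕ) : Prop :=
  ∃ h : k + 1 < n, σ ⟨k + 1, h⟩ < σ ⟨k, Nat.lt_of_succ_lt h⟩

noncomputable def desFinset (n : ℕ) (σ : Equiv.Perm (Fin n)) : Finset (Fin (n-1)) :=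
  univ.filter (fun j => DesAt n σ j.val)

/-- `σ` is strictly increasing on each block of the composition `c`. -/
def IncrOn (c : Composition n) (σ : Equiv.Perm (Fin n)) : Prop :=
  ∀ i : Fin c.length, StrictMono (fun j => σ (c.embedding i j))

/-- Every descent of `σ` is at an inner boundary of `c`. -/
def QCond (c : Composition n) (σ : Equiv.Perm (Fin n)) : Prop :=
  ∀ k (h : k + 1 < n), σ ⟨k + 1, h⟩ < σ ⟨k, Nat.lt_of_succ_lt h⟩ →
    ∃ i, 0 < i ∧ i < c.length ∧ c.sizeUpTo i = k + 1

noncomputable def myEquiv (n : ℕ) : Composition n ≃ Finset (Fin (n-1)) :=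
  (compositionEquiv n).trans (compositionAsSetEquiv n)

def hperm (c : Composition n) (π : ∀ i : Fin c.length, Equiv.Perm (Fin (c.blocksFun i))) :
    Equiv.Perm (Fin n) :=
  c.blocksFinEquiv.permCongr (Equiv.sigmaCongrRight π)

theorem strictMono_of_lt_succ' {m : ℕ} {α : Type*} [Preorder α] {f : Fin m → α}
    (h : ∀ k (hk : k + 1 < m), f ⟨k, Nat.lt_of_succ_lt hk⟩ < f ⟨k + 1, hk⟩) :
    StrictMono f := by
  match m with
  | 0 => intro a; exact absurd a.isLt (by omega)
  | m + 1 =>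
    rw [Fin.strictMono_iff_lt_succ]
    intro i
    have := h i.val (by omega)
    exact this

theorem sizeUpTo_inj (c : Composition n) {a b : ℕ} (ha : a ≤ c.length) (hb : b ≤ c.length)
    (h : c.sizeUpTo a = c.sizeUpTo b) : a = b := by
  rcases lt_trichotomy a b with hlt | heq | hlt
  · exfalso
    have h1 : c.sizeUpTo a < c.sizeUpTo (a+1) := c.sizeUpTo_strict_mono (by omega)
    have h2 : c.sizeUpTo (a+1) ≤ c.sizeUpTo b := c.monotone_sizeUpTo (by omega)
    omega
  · exact heq
  · exfalso
    have h1 : c.sizeUpTo b < c.sizeUpTo (b+1) := c.sizeUpTo_strict_mono (by omega)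
    have h2 : c.sizeUpTo (b+1) ≤ c.sizeUpTo a := c.monotone_sizeUpTo (by omega)
    omega

theorem sizeUpTo_bounds (c : Composition n) {a : ℕ} (h0 : 0 < a) (hl : a < c.length) :
    1 ≤ c.sizeUpTo a ∧ c.sizeUpTo a < n := by
  constructor
  · have h1 : c.sizeUpTo 0 < c.sizeUpTo 1 := c.sizeUpTo_strict_mono (by omega)
    have h2 : c.sizeUpTo 1 ≤ c.sizeUpTo a := c.monotone_sizeUpTo (by omega)
    simp only [Composition.sizeUpTo] at h1 h2 ⊢
    simp at h1
    omega
  · have h1 : c.sizeUpTo a < c.sizeUpTo (a+1) := c.sizeUpTo_strict_mono (by omega)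
    have h2 : c.sizeUpTo (a+1) ≤ c.sizeUpTo c.length := c.monotone_sizeUpTo (by omega)
    rw [c.sizeUpTo_length] at h2
    omega

theorem mem_myEquiv (c : Composition n) (j : Fin (n-1)) :
    j ∈ myEquiv n c ↔ ∃ i, 0 < i ∧ i < c.length ∧ c.sizeUpTo i = (j : ℕ) + 1 := by
  have hjn : (j : ℕ) + 1 < n := by omega
  simp only [myEquiv, Equiv.trans_apply, compositionAsSetEquiv, Equiv.coe_fn_mk,
    Set.mem_toFinset, Set.mem_setOf_eq, compositionEquiv]
  change (⟨1 + (j:ℕ), _⟩ : Fin (n+1)) ∈ c.toCompositionAsSet.boundaries ↔ _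
  rw [Composition.toCompositionAsSet_boundaries]
  simp only [Composition.boundaries, Finset.mem_map, Finset.mem_univ, true_and]
  constructor
  · rintro ⟨i, hi⟩
    have hival : c.sizeUpTo i = 1 + (j:ℕ) := by
      have := congrArg Fin.val hi
      simpa [Composition.boundary] using this
    refine ⟨i, ?_, ?_, by omega⟩
    · rcases Nat.eq_zero_or_pos (i : ℕ) with h0 | h0
      · exfalso; rw [h0] at hival; simp at hival; omega
      · exact h0
    · rcases lt_or_eq_of_le (Nat.lt_succ_iff.mp i.isLt) with h | h
      · exact h
      · exfalso
        have : c.sizeUpTo i = n := by rw [h]; exact c.sizeUpTo_length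
        omega
  · rintro ⟨i, hi0, hil, hival⟩
    refine ⟨⟨i, by omega⟩, ?_⟩
    apply Fin.ext
    simpa [Composition.boundary] using (by omega : c.sizeUpTo i = 1 + (j:ℕ))

theorem card_myEquiv (c : Composition n) : (myEquiv n c).card = c.length - 1 := by
  rw [show c.length - 1 = (Finset.Ioo 0 c.length).card by simp]
  symm
  apply Finset.card_bij (fun (a : ℕ) (ha : a ∈ Finset.Ioo 0 c.length) =>
    (⟨c.sizeUpTo a - 1, by
      have := sizeUpTo_bounds c (Finset.mem_Ioo.mp ha).1 (Finset.mem_Ioo.mp ha).2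
      omega⟩ : Fin (n-1)))
  · intro a ha
    rw [mem_myEquiv]
    obtain ⟨h0, hl⟩ := Finset.mem_Ioo.mp ha
    have := sizeUpTo_bounds c h0 hl
    exact ⟨a, h0, hl, by simp; omega⟩
  · intro a ha b hb hab
    obtain ⟨ha0, hal⟩ := Finset.mem_Ioo.mp ha
    obtain ⟨hb0, hbl⟩ := Finset.mem_Ioo.mp hb
    have h1 := sizeUpTo_bounds c ha0 hal
    have h2 := sizeUpTo_bounds c hb0 hbl
    have := congrArg Fin.val hab
    simp at this
    exact sizeUpTo_inj c (le_of_lt hal) (le_of_lt hbl) (by omega)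
  · intro j hj
    obtain ⟨i, hi0, hil, hival⟩ := (mem_myEquiv c j).mp hj
    exact ⟨i, Finset.mem_Ioo.mpr ⟨hi0, hil⟩, by apply Fin.ext; simp; omega⟩

theorem incrOn_iff_qcond (c : Composition n) (σ : Equiv.Perm (Fin n)) :
    IncrOn c σ ↔ QCond c σ := by
  constructor
  · intro hP k hk hdes
    by_contra hno
    push_neg at hno
    set i := c.index ⟨k, Nat.lt_of_succ_lt hk⟩ with hi
    have h1 : c.sizeUpTo i ≤ k := c.sizeUpTo_index_le ⟨k, Nat.lt_of_succ_lt hk⟩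
    have h2 : k < c.sizeUpTo (i + 1) := c.lt_sizeUpTo_index_succ ⟨k, Nat.lt_of_succ_lt hk⟩
    rcases eq_or_lt_of_le (show k + 1 ≤ c.sizeUpTo ((i:ℕ) + 1) by omega) with heq | hlt
    · have hlen : (i:ℕ) + 1 < c.length := by
        rcases lt_or_eq_of_le (Nat.succ_le_of_lt i.isLt) with h | h
        · exact h
        · exfalso
          have : c.sizeUpTo ((i:ℕ)+1) = n := by
            rw [show (i:ℕ)+1 = c.length from h]; exact c.sizeUpTo_length
          omega
      exact absurd heq.symm (hno ((i:ℕ)+1) (by omega) hlen)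
    · have hmem1 : (⟨k, Nat.lt_of_succ_lt hk⟩ : Fin n) ∈ Set.range (c.embedding i) :=
        c.mem_range_embedding _
      have hmem2 : (⟨k+1, hk⟩ : Fin n) ∈ Set.range (c.embedding i) := by
        rw [Composition.mem_range_embedding_iff]
        constructor
        · simpa using by omega
        · simpa using hlt
      obtain ⟨a, ha⟩ := hmem1
      obtain ⟨b, hb⟩ := hmem2
      have hav : c.sizeUpTo i + (a:ℕ) = k := by
        have := congrArg Fin.val ha; simpa using this
      have hbv : c.sizeUpTo i + (b:ℕ) = k + 1 := by
        have := congrArg Fin.val hb; simpa using this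
      have hab : a < b := by rw [Fin.lt_iff_val_lt_val]; omega
      have := hP i hab
      simp only [ha, hb] at this
      exact absurd hdes (asymm this)
  · intro hQ i
    apply strictMono_of_lt_succ'
    intro k hk
    set K := c.sizeUpTo i + k with hK
    have hKlt : K + 1 < n := by
      have h4 := (c.embedding i ⟨k+1, hk⟩).isLt
      rw [Composition.coe_embedding] at h4
      simp only [K] at *
      omega
    have hemb1 : c.embedding i ⟨k, Nat.lt_of_succ_lt hk⟩ = ⟨K, Nat.lt_of_succ_lt hKlt⟩ := by
      apply Fin.ext; simp [K]
    have hemb2 : c.embedding i ⟨k+1, hk⟩ = ⟨K + 1, hKlt⟩ := by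
      apply Fin.ext; simp [K]; omega
    rw [hemb1, hemb2]
    rcases lt_trichotomy (σ ⟨K, Nat.lt_of_succ_lt hKlt⟩) (σ ⟨K+1, hKlt⟩) with h | h | h
    · exact h
    · exact absurd (σ.injective h) (by simp [Fin.ext_iff])
    · exfalso
      obtain ⟨i', hi'0, hi'l, hi'v⟩ := hQ K hKlt h
      have hub : K + 1 < c.sizeUpTo ((i:ℕ)+1) := by
        rw [c.sizeUpTo_succ' i]; omega
      have hlb : c.sizeUpTo (i:ℕ) < c.sizeUpTo i' := by omega
      have c1 : (i:ℕ) < i' := by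
        by_contra hc
        exact absurd (c.monotone_sizeUpTo (not_lt.mp hc)) (not_le.mpr hlb)
      have c2 : (i' : ℕ) < (i:ℕ) + 1 := by
        by_contra hc
        have := c.monotone_sizeUpTo (not_lt.mp hc)
        omega
      omega

theorem hperm_embedding (c : Composition n)
    (π : ∀ i : Fin c.length, Equiv.Perm (Fin (c.blocksFun i))) (i : Fin c.length)
    (j : Fin (c.blocksFun i)) :
    hperm c π (c.embedding i j) = c.embedding i (π i j) := by
  simp only [hperm, Equiv.permCongr_apply]
  rw [show c.embedding i j = c.blocksFinEquiv ⟨i, j⟩ from rfl, Equiv.symm_apply_apply]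
  rfl

theorem hperm_inv (c : Composition n)
    (π : ∀ i : Fin c.length, Equiv.Perm (Fin (c.blocksFun i))) :
    (hperm c π)⁻¹ = hperm c (fun i => (π i)⁻¹) := by
  show (hperm c π).symm = _
  simp only [hperm, Equiv.permCongr, Equiv.equivCongr]
  ext x
  simp [Equiv.sigmaCongrRight_symm]

theorem count_incrOn (c : Composition n) :
    (univ.filter (fun σ : Equiv.Perm (Fin n) => IncrOn c σ)).card *
      ∏ i, (c.blocksFun i).factorial = n.factorial := by
  classical
  have hbij : Function.Bijective
      (fun p : {σ : Equiv.Perm (Fin n) // IncrOn c σ} ×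
          (∀ i : Fin c.length, Equiv.Perm (Fin (c.blocksFun i))) =>
        (p.1.1 : Equiv.Perm (Fin n)) * hperm c p.2) := by
    constructor
    · rintro ⟨⟨σ₀, h₀⟩, π⟩ ⟨⟨σ₁, h₁⟩, ρ⟩ heq
      simp only at heq
      have hfun : ∀ i : Fin c.length,
          (fun j => σ₀ (c.embedding i j)) = (fun j => σ₁ (c.embedding i j)) := by
        intro i
        have himg : ∀ (σ' : Equiv.Perm (Fin n))
            (π' : ∀ i : Fin c.length, Equiv.Perm (Fin (c.blocksFun i))),
            Finset.image (fun j => (σ' * hperm c π') (c.embedding i j)) univ =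
            Finset.image (fun j => σ' (c.embedding i j)) univ := by
          intro σ' π'
          have : (fun j => (σ' * hperm c π') (c.embedding i j)) =
              (fun j => σ' (c.embedding i j)) ∘ ⇑(π' i) := by
            funext j
            simp [Equiv.Perm.mul_apply, hperm_embedding]
          rw [this, ← Finset.image_image, Finset.image_univ_equiv]
        have himgs : Finset.image (fun j => σ₀ (c.embedding i j)) univ =
            Finset.image (fun j => σ₁ (c.embedding i j)) univ := by
          rw [← himg σ₀ π, heq, himg σ₁ ρ]
        have hinj0 : Function.Injective (fun j => σ₀ (c.embedding i j)) :=
          σ₀.injective.comp (c.embedding i).injective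
        have hA : (Finset.image (fun j => σ₀ (c.embedding i j)) univ).card = c.blocksFun i := by
          rw [Finset.card_image_of_injective _ hinj0, card_univ, Fintype.card_fin]
        have e0 := Finset.orderEmbOfFin_unique hA
          (fun x => Finset.mem_image_of_mem _ (mem_univ x)) (h₀ i)
        have e1 := Finset.orderEmbOfFin_unique (f := fun j => σ₁ (c.embedding i j)) hA
          (fun x => by rw [himgs]; exact Finset.mem_image_of_mem _ (mem_univ x)) (h₁ i)
        rw [e0, e1]
      have hσ : σ₀ = σ₁ := by
        apply Equiv.ext
        intro x
        conv_lhs => rw [← c.embedding_comp_inv x]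
        conv_rhs => rw [← c.embedding_comp_inv x]
        exact congrFun (hfun (c.index x)) _
      have hh : hperm c π = hperm c ρ := by
        subst hσ
        exact mul_left_cancel heq
      have hπ : π = ρ := by
        have h2 : Equiv.sigmaCongrRight π = Equiv.sigmaCongrRight ρ :=
          (Equiv.permCongr c.blocksFinEquiv).injective hh
        funext i
        apply Equiv.ext
        intro j
        have h3 : (⟨i, π i j⟩ : (i : Fin c.length) × Fin (c.blocksFun i)) = ⟨i, ρ i j⟩ := by
          simpa using congrArg (fun (e : Equiv.Perm ((i : Fin c.length) × Fin (c.blocksFun i))) =>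
            e ⟨i, j⟩) h2
        exact eq_of_heq (Sigma.mk.inj_iff.mp h3).2
      subst hπ
      simp_all
    · intro σ
      set g : ∀ i : Fin c.length, Fin (c.blocksFun i) → Fin n :=
        fun i j => σ (c.embedding i j) with hg
      have hginj : ∀ i, Function.Injective (g i) :=
        fun i => σ.injective.comp (c.embedding i).injective
      have hA : ∀ i, (Finset.image (g i) univ).card = c.blocksFun i := by
        intro i
        rw [Finset.card_image_of_injective _ (hginj i), card_univ, Fintype.card_fin]
      set u : ∀ i : Fin c.length, Fin (c.blocksFun i) → Fin (c.blocksFun i) :=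
        fun i j => ((Finset.image (g i) univ).orderIsoOfFin (hA i)).symm
          ⟨g i j, Finset.mem_image_of_mem _ (mem_univ j)⟩ with hu
      have huinj : ∀ i, Function.Injective (u i) := by
        intro i a b hab
        apply hginj i
        have h7 := congrArg (((Finset.image (g i) univ).orderIsoOfFin (hA i))) hab
        simp only [hu, OrderIso.apply_symm_apply, Subtype.mk.injEq] at h7
        exact h7
      set π : ∀ i : Fin c.length, Equiv.Perm (Fin (c.blocksFun i)) :=
        fun i => Equiv.ofBijective (u i) (Finite.injective_iff_bijective.mp (huinj i)) with hπ
      refine ⟨⟨⟨σ * (hperm c π)⁻¹, ?_⟩, π⟩, ?_⟩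
      · intro i
        have hval : ∀ j, (σ * (hperm c π)⁻¹) (c.embedding i j) =
            ((Finset.image (g i) univ).orderIsoOfFin (hA i) j : Fin n) := by
          intro j
          rw [hperm_inv]
          have : (σ * hperm c (fun i => (π i)⁻¹)) (c.embedding i j) =
              σ (c.embedding i ((π i)⁻¹ j)) := by
            simp [Equiv.Perm.mul_apply, hperm_embedding]
          rw [this]
          have h5 : g i ((π i)⁻¹ j) =
              ((Finset.image (g i) univ).orderIsoOfFin (hA i) (u i ((π i)⁻¹ j)) : Fin n) := by
            simp only [u, OrderIso.apply_symm_apply]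
          have h6 : u i ((π i)⁻¹ j) = j := by
            have : u i ((π i)⁻¹ j) = π i ((π i)⁻¹ j) := rfl
            rw [this]; exact (π i).apply_symm_apply j
          rw [show σ (c.embedding i ((π i)⁻¹ j)) = g i ((π i)⁻¹ j) from rfl, h5, h6]
        intro a b hab
        simp only [hval]
        exact Subtype.coe_lt_coe.mpr
          (((Finset.image (g i) univ).orderIsoOfFin (hA i)).strictMono hab)
      · simp [mul_assoc]
  have hcard := Fintype.card_of_bijective hbij
  rw [Fintype.card_prod, Fintype.card_pi, Fintype.card_subtype] at hcard
  simpa [Fintype.card_perm, Fintype.card_fin] using hcard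

theorem sum_comp_reindex (hn : 1 ≤ n) {M : Type*} [CommSemiring M] (f : ℕ → M) :
    (∑ l ∈ Finset.Icc 1 n,
      ∑ s ∈ (Finset.Nat.antidiagonalTuple l n).filter (fun s => ∀ i, 1 ≤ s i),
        ∏ i, f (s i)) = ∑ c : Composition n, ∏ i, f (c.blocksFun i) := by
  rw [Finset.sum_sigma']
  have key : ∀ (p : Σ l : ℕ, Fin l → ℕ),
      p ∈ (Finset.Icc 1 n).sigma
        (fun l => (Finset.Nat.antidiagonalTuple l n).filter (fun s => ∀ i, 1 ≤ s i)) →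
      (∀ q ∈ List.ofFn p.2, 0 < q) ∧ (List.ofFn p.2).sum = n := by
    rintro ⟨l, s⟩ hp
    rw [Finset.mem_sigma, Finset.mem_filter, Finset.Nat.mem_antidiagonalTuple] at hp
    constructor
    · intro q hq
      rw [List.mem_ofFn] at hq
      obtain ⟨k, rfl⟩ := hq
      exact hp.2.2 k
    · rw [List.sum_ofFn]; exact hp.2.1
  apply Finset.sum_bij' (i := fun p hp =>
      (⟨List.ofFn p.2, fun {q} hq => (key p hp).1 q hq, (key p hp).2⟩ :
      Composition n)) (j := fun c _ => ⟨c.length, c.blocksFun⟩)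
  case hi => intro a ha; exact Finset.mem_univ _
  case hj =>
    intro c _
    rw [Finset.mem_sigma, Finset.mem_filter, Finset.Nat.mem_antidiagonalTuple]
    refine ⟨Finset.mem_Icc.mpr ⟨c.length_pos_of_pos hn, c.length_le⟩,
      c.sum_blocksFun, fun i => c.one_le_blocksFun i⟩
  case left_neg =>
    rintro ⟨l, s⟩ hp
    have hlen : (⟨List.ofFn s, fun {q} hq => (key ⟨l, s⟩ hp).1 q hq, (key ⟨l, s⟩ hp).2⟩ :
        Composition n).length = l := by
      simp [Composition.length]
    refine Sigma.ext hlen ?_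
    rw [Fin.heq_fun_iff hlen]
    intro j
    simp [Composition.blocksFun, Composition.blocks, List.get_ofFn]
  case right_neg =>
    intro c _
    exact Composition.ext (Composition.ofFn_blocksFun c)
  case h =>
    rintro ⟨l, s⟩ hp
    have h1 : (∏ i, f (s i)) = (List.map f (List.ofFn s)).prod := by
      rw [List.map_ofFn, List.prod_ofFn]; rfl
    have h2 : ∀ (c : Composition n), (∏ i, f (c.blocksFun i)) = (List.map f c.blocks).prod := by
      intro c
      conv_rhs => rw [← Composition.ofFn_blocksFun c]
      rw [List.map_ofFn, List.prod_ofFn]; rfl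
    rw [h1, h2]

theorem pow_sum_powerset {α : Type*} (A : Finset α) :
    ∑ T ∈ A.powerset, ((X : ℚ[X]) - 1) ^ (A.card - T.card) = X ^ A.card := by
  have h := Finset.prod_add (fun _ : α => (1 : ℚ[X])) (fun _ => X - 1) A
  simp only [Finset.prod_const_one, one_mul, Finset.prod_const] at h
  have h2 : ∀ T ∈ A.powerset, (X - 1 : ℚ[X]) ^ (A \ T).card = (X - 1) ^ (A.card - T.card) := by
    intro T hT
    rw [Finset.card_sdiff_of_subset (Finset.mem_powerset.mp hT)]
  rw [Finset.sum_congr rfl h2] at h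
  rw [← h]
  congr 1
  ring

theorem incrOn_iff_subset (c : Composition n) (σ : Equiv.Perm (Fin n)) :
    IncrOn c σ ↔ desFinset n σ ⊆ myEquiv n c := by
  rw [incrOn_iff_qcond]
  constructor
  · intro hQ j hj
    simp only [desFinset, Finset.mem_filter, Finset.mem_univ, true_and] at hj
    obtain ⟨h, hlt⟩ := hj
    rw [mem_myEquiv]
    exact hQ j.val h hlt
  · intro hsub k h hdes
    have hk : k < n - 1 := by omega
    have hj : (⟨k, hk⟩ : Fin (n-1)) ∈ desFinset n σ := by
      simp only [desFinset, Finset.mem_filter, Finset.mem_univ, true_and]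
      exact ⟨h, hdes⟩
    have := hsub hj
    rw [mem_myEquiv] at this
    exact this

theorem sum_over_comp (hn : 1 ≤ n) (σ : Equiv.Perm (Fin n)) :
    ∑ c ∈ univ.filter (fun c : Composition n => IncrOn c σ),
      ((X : ℚ[X]) - 1) ^ (n - c.length)
      = X ^ (n - 1 - (desFinset n σ).card) := by
  set D := desFinset n σ with hD
  have hstep1 : ∑ c ∈ univ.filter (fun c : Composition n => IncrOn c σ),
      ((X : ℚ[X]) - 1) ^ (n - c.length)
      = ∑ S ∈ univ.filter (fun S : Finset (Fin (n-1)) => D ⊆ S),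
        ((X : ℚ[X]) - 1) ^ (n - 1 - S.card) := by
    apply Finset.sum_bij' (i := fun c _ => myEquiv n c) (j := fun S _ => (myEquiv n).symm S)
    case hi =>
      intro c hc
      simp only [Finset.mem_filter, Finset.mem_univ, true_and] at hc ⊢
      exact (incrOn_iff_subset c σ).mp hc
    case hj =>
      intro S hS
      simp only [Finset.mem_filter, Finset.mem_univ, true_and] at hS ⊢
      rw [incrOn_iff_subset]
      simpa using hS
    case left_neg => intro c _; simp
    case right_neg => intro S _; simp
    case h =>
      intro c hc
      congr 1
      rw [card_myEquiv]
      have h1 : 1 ≤ c.length := c.length_pos_of_pos hn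
      have h2 : c.length ≤ n := c.length_le
      omega
  rw [hstep1]
  have hstep2 : ∑ S ∈ univ.filter (fun S : Finset (Fin (n-1)) => D ⊆ S),
      ((X : ℚ[X]) - 1) ^ (n - 1 - S.card)
      = ∑ T ∈ Dᶜ.powerset, ((X : ℚ[X]) - 1) ^ (Dᶜ.card - T.card) := by
    apply Finset.sum_bij' (i := fun S _ => S \ D) (j := fun T _ => T ∪ D)
    case hi =>
      intro S hS
      simp only [Finset.mem_powerset]
      intro x hx
      simp only [Finset.mem_sdiff] at hx
      simp [Finset.mem_compl, hx.2]
    case hj =>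
      intro T hT
      simp only [Finset.mem_filter, Finset.mem_univ, true_and]
      exact Finset.subset_union_right
    case left_neg =>
      intro S hS
      simp only [Finset.mem_filter, Finset.mem_univ, true_and] at hS
      exact Finset.sdiff_union_of_subset hS
    case right_neg =>
      intro T hT
      simp only [Finset.mem_powerset] at hT
      have hdisj : Disjoint T D := by
        rw [Finset.disjoint_right]
        intro x hxD hxT
        have := hT hxT
        simp [Finset.mem_compl] at this
        exact this hxD
      rw [Finset.union_sdiff_distrib, Finset.sdiff_self, Finset.union_empty,
        Finset.sdiff_eq_self_of_disjoint hdisj]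
    case h =>
      intro S hS
      simp only [Finset.mem_filter, Finset.mem_univ, true_and] at hS
      congr 1
      have h1 : (S \ D).card = S.card - D.card := Finset.card_sdiff_of_subset hS
      have h2 : D.card ≤ S.card := Finset.card_le_card hS
      have h3 : S.card ≤ n - 1 := by
        have := Finset.card_le_card (Finset.subset_univ S)
        simpa using this
      have h4 : Dᶜ.card = (n - 1) - D.card := by
        rw [Finset.card_compl]
        simp
      omega
  rw [hstep2, pow_sum_powerset]
  congr 1
  rw [Finset.card_compl]
  simp

theorem prod_body (c : Composition n) :
    ∏ i, (((X : ℚ[X]) - 1) ^ (c.blocksFun i - 1) * C (((c.blocksFun i).factorial : ℚ)⁻¹))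
      = ((X : ℚ[X]) - 1) ^ (n - c.length) * C (∏ i, ((c.blocksFun i).factorial : ℚ)⁻¹) := by
  rw [Finset.prod_mul_distrib, Finset.prod_pow_eq_pow_sum, map_prod]
  congr 2
  have h1 : ∑ i, (c.blocksFun i - 1) = (∑ i, c.blocksFun i) - ∑ i : Fin c.length, 1 := by
    apply Finset.sum_tsub_distrib
    intro i _
    exact c.one_le_blocksFun i
  rw [h1, c.sum_blocksFun]
  simp

theorem pPoly_eq_sum_perm (hn : 1 ≤ n) :
    pPoly n = ∑ σ : Equiv.Perm (Fin n), (X : ℚ[X]) ^ (n - 1 - (desFinset n σ).card) := by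
  rw [pPoly, sum_comp_reindex hn (fun k => ((X : ℚ[X]) - 1) ^ (k - 1) * C ((k.factorial : ℚ)⁻¹))]
  rw [Finset.smul_sum]
  have hterm : ∀ c : Composition n,
      (n.factorial : ℚ) • ∏ i, (((X : ℚ[X]) - 1) ^ (c.blocksFun i - 1) *
        C (((c.blocksFun i).factorial : ℚ)⁻¹))
      = ((univ.filter (fun σ : Equiv.Perm (Fin n) => IncrOn c σ)).card : ℕ) •
        (((X : ℚ[X]) - 1) ^ (n - c.length)) := by
    intro c
    rw [prod_body, Polynomial.smul_eq_C_mul]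
    have hfac : ((n.factorial : ℚ) * ∏ i, ((c.blocksFun i).factorial : ℚ)⁻¹)
        = ((univ.filter (fun σ : Equiv.Perm (Fin n) => IncrOn c σ)).card : ℚ) := by
      have hc := count_incrOn c
      have hcast : ((univ.filter (fun σ : Equiv.Perm (Fin n) => IncrOn c σ)).card : ℚ) *
          ∏ i, ((c.blocksFun i).factorial : ℚ) = (n.factorial : ℚ) := by
        rw [← Nat.cast_prod, ← Nat.cast_mul, hc]
      have hne : (∏ i, ((c.blocksFun i).factorial : ℚ)) ≠ 0 := by
        apply Finset.prod_ne_zero_iff.mpr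
        intro i _
        exact_mod_cast (c.blocksFun i).factorial_ne_zero
      rw [Finset.prod_inv_distrib, ← hcast, mul_inv_cancel_right₀ hne]
    calc C (n.factorial : ℚ) * (((X : ℚ[X]) - 1) ^ (n - c.length) *
          C (∏ i, ((c.blocksFun i).factorial : ℚ)⁻¹))
        = C ((n.factorial : ℚ) * ∏ i, ((c.blocksFun i).factorial : ℚ)⁻¹) *
          ((X : ℚ[X]) - 1) ^ (n - c.length) := by rw [map_mul]; ring
      _ = _ := by rw [hfac, ← Polynomial.smul_eq_C_mul, Nat.cast_smul_eq_nsmul]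
  calc ∑ c : Composition n, (n.factorial : ℚ) • ∏ i, (((X : ℚ[X]) - 1) ^ (c.blocksFun i - 1) *
          C (((c.blocksFun i).factorial : ℚ)⁻¹))
      = ∑ c : Composition n, ∑ σ ∈ univ.filter (fun σ : Equiv.Perm (Fin n) => IncrOn c σ),
          ((X : ℚ[X]) - 1) ^ (n - c.length) := by
        refine Finset.sum_congr rfl fun c _ => ?_
        rw [hterm c, Finset.sum_const]
    _ = ∑ σ : Equiv.Perm (Fin n), ∑ c ∈ univ.filter (fun c : Composition n => IncrOn c σ),
          ((X : ℚ[X]) - 1) ^ (n - c.length) := by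
        simp_rw [Finset.sum_filter]
        exact Finset.sum_comm
    _ = _ := Finset.sum_congr rfl fun σ _ => sum_over_comp hn σ

theorem descents_eq (σ : Equiv.Perm (Fin n)) : descents n σ = (desFinset n σ).card := by
  rw [descents]
  have e : {kk : Fin n // ∃ hk : kk.val + 1 < n, σ ⟨kk.val + 1, hk⟩ < σ kk} ≃
      {j : Fin (n-1) // DesAt n σ j.val} :=
    { toFun := fun kk => ⟨⟨kk.1.1, by obtain ⟨hk, _⟩ := kk.2; omega⟩, kk.2⟩
      invFun := fun j => ⟨⟨j.1.1, by obtain ⟨hk, _⟩ := j.2; omega⟩, j.2⟩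
      left_inv := fun kk => by ext; rfl
      right_inv := fun j => by ext; rfl }
  rw [Nat.card_congr e, Nat.card_eq_fintype_card, Fintype.card_subtype]
  rfl

theorem desAt_iff (hn : 1 ≤ n) (σ : Equiv.Perm (Fin n)) (j : Fin (n-1)) :
    DesAt n σ j.val ↔ σ ⟨j.val + 1, by omega⟩ < σ ⟨j.val, by omega⟩ := by
  constructor
  · rintro ⟨h, hlt⟩; exact hlt
  · intro h; exact ⟨by omega, h⟩

theorem desFinset_rev (σ : Equiv.Perm (Fin n)) :
    desFinset n (Fin.revPerm * σ) = (desFinset n σ)ᶜ := by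
  ext j
  have hn : 1 ≤ n := by have := j.isLt; omega
  simp only [desFinset, Finset.mem_compl, Finset.mem_filter, Finset.mem_univ, true_and,
    desAt_iff hn]
  rw [Equiv.Perm.mul_apply, Equiv.Perm.mul_apply]
  simp only [Fin.revPerm_apply]
  rw [Fin.rev_lt_rev]
  constructor
  · intro h hlt; exact absurd h (asymm hlt)
  · intro h
    rcases lt_trichotomy (σ ⟨j.val, by omega⟩) (σ ⟨j.val + 1, by omega⟩) with h1 | h1 | h1
    · exact h1
    · exact absurd (σ.injective h1) (by simp [Fin.ext_iff])
    · exact absurd h1 h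

theorem descents_le (σ : Equiv.Perm (Fin n)) : (desFinset n σ).card ≤ n - 1 := by
  calc (desFinset n σ).card ≤ (univ : Finset (Fin (n-1))).card := Finset.card_le_card
        (Finset.subset_univ _)
    _ = n - 1 := by simp

theorem sum_rev_eq :
    (∑ σ : Equiv.Perm (Fin n), (X : ℚ[X]) ^ (n - 1 - (desFinset n σ).card))
      = ∑ σ : Equiv.Perm (Fin n), (X : ℚ[X]) ^ (desFinset n σ).card := by
  rw [← Equiv.sum_comp (Equiv.mulLeft (Fin.revPerm : Equiv.Perm (Fin n)))
    (fun σ => (X : ℚ[X]) ^ (desFinset n σ).card)]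
  refine Finset.sum_congr rfl fun σ _ => ?_
  congr 1
  rw [Equiv.coe_mulLeft, desFinset_rev, Finset.card_compl]
  simp

theorem desFinset_revPerm (hn : 1 ≤ n) :
    desFinset n (Fin.revPerm : Equiv.Perm (Fin n)) = univ := by
  ext j
  simp only [desFinset, Finset.mem_filter, Finset.mem_univ, true_and, DesAt,
    Fin.revPerm_apply]
  rw [iff_true]
  refine ⟨by omega, ?_⟩
  rw [Fin.rev_lt_rev]
  simp [Fin.lt_iff_val_lt_val]

theorem coeff_final (hn : 1 ≤ n) (i : ℕ) :
    (pPoly n).coeff i = ((univ.filter (fun σ : Equiv.Perm (Fin n) =>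
      (desFinset n σ).card = i)).card : ℚ) := by
  rw [pPoly_eq_sum_perm hn, sum_rev_eq, Polynomial.finset_sum_coeff]
  simp only [Polynomial.coeff_X_pow]
  have hswap : ∀ σ : Equiv.Perm (Fin n),
      (if i = (desFinset n σ).card then (1:ℚ) else 0)
        = if (desFinset n σ).card = i then (1:ℚ) else 0 := by
    intro σ; simp [eq_comm]
  rw [Finset.sum_congr rfl (fun σ _ => hswap σ), Finset.sum_boole]

/-- `p_n(q)` has degree `n-1` and its coefficients are the Eulerian numbers:
the coefficient of `q^i` is the number of permutations of `{1,…,n}` with exactly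
`i` descents. -/
theorem stmt_3 (n : ℕ) (hn : 1 ≤ n) :
    (pPoly n).natDegree = n - 1 ∧
    ∀ i : ℕ, (pPoly n).coeff i =
      (Nat.card {σ : Equiv.Perm (Fin n) // descents n σ = i} : ℚ) := by
  have hcoeff : ∀ i : ℕ, (pPoly n).coeff i = ((univ.filter (fun σ : Equiv.Perm (Fin n) =>
      (desFinset n σ).card = i)).card : ℚ) := coeff_final hn
  constructor
  · apply le_antisymm
    · rw [Polynomial.natDegree_le_iff_coeff_eq_zero]
      intro m hm
      rw [hcoeff m]
      norm_cast
      rw [Finset.card_eq_zero, Finset.filter_eq_empty_iff]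
      intro σ _
      have := descents_le σ
      omega
    · apply Polynomial.le_natDegree_of_ne_zero
      rw [hcoeff (n-1)]
      have hmem : (Fin.revPerm : Equiv.Perm (Fin n)) ∈ univ.filter
          (fun σ : Equiv.Perm (Fin n) => (desFinset n σ).card = n - 1) := by
        simp only [Finset.mem_filter, Finset.mem_univ, true_and]
        rw [desFinset_revPerm hn]
        simp
      have hpos : 0 < (univ.filter (fun σ : Equiv.Perm (Fin n) =>
          (desFinset n σ).card = n - 1)).card := Finset.card_pos.mpr ⟨_, hmem⟩
      positivity
  · intro i
    rw [hcoeff i]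
    congr 1
    rw [Nat.card_eq_fintype_card, Fintype.card_subtype]
    congr 1
    apply Finset.filter_congr
    intro σ _
    rw [descents_eq σ]
end

section
/- The formal power series identity 1 + ∑_{n≥1} (p_n(q)/n!) y^n = (q−1)/(q − e^{(q−1)y}) holds in Q[q][[y]], where p_n(q) = n! · ∑_{l=1}^{n} ∑_{s_1+...+s_l=n, s_i≥1} ∏_i (q−1)^{s_i−1}/s_i!. -/
open Polynomial

noncomputable def gAux (k : ℕ) : Polynomial ℚ :=
  if k = 0 then 0 else (X - 1) ^ (k - 1) * C ((k.factorial : ℚ)⁻¹)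

noncomputable def GAux : PowerSeries (Polynomial ℚ) := PowerSeries.mk gAux

noncomputable def toFinsupp' (l : ℕ) (s : Fin l → ℕ) : ℕ →₀ ℕ :=
  Finsupp.onFinset (Finset.range l) (fun i => if h : i < l then s ⟨i, h⟩ else 0)
    (fun i hi => Finset.mem_range.mpr (by by_contra h; simp [h] at hi))

lemma sum_toFinsupp' (l : ℕ) (s : Fin l → ℕ) :
    (Finset.range l).sum ⇑(toFinsupp' l s) = ∑ i, s i := by
  have h2 : ∑ i ∈ Finset.range l, (fun i => if h : i < l then s ⟨i, h⟩ else 0) i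
      = ∑ i : Fin l, s i := by
    rw [← Fin.sum_univ_eq_sum_range]
    exact Finset.sum_congr rfl fun i _ => dif_pos i.2
  exact h2

lemma coeff_GAux_pow (l n : ℕ) :
    PowerSeries.coeff (R := Polynomial ℚ) n (GAux ^ l) =
      ∑ s ∈ Finset.Nat.antidiagonalTuple l n, ∏ i, gAux (s i) := by
  rw [PowerSeries.coeff_pow]
  refine Finset.sum_bij' (fun f _ => fun i : Fin l => f i.1)
    (fun s _ => toFinsupp' l s) ?_ ?_ ?_ ?_ ?_
  · intro f hf
    simp only [Finset.mem_finsuppAntidiag] at hf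
    rw [Finset.Nat.mem_antidiagonalTuple]
    exact (Fin.sum_univ_eq_sum_range (fun i => f i) l).trans hf.1
  · intro s hs
    rw [Finset.Nat.mem_antidiagonalTuple] at hs
    rw [Finset.mem_finsuppAntidiag]
    exact ⟨(sum_toFinsupp' l s).trans hs, Finsupp.support_onFinset_subset⟩
  · intro f hf
    simp only [Finset.mem_finsuppAntidiag] at hf
    ext i
    simp only [toFinsupp', Finsupp.onFinset_apply]
    split
    · rfl
    · next h =>
      symm
      by_contra hne
      exact h (Finset.mem_range.mp (hf.2 (Finsupp.mem_support_iff.mpr hne)))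
  · intro s hs
    funext i
    simp [toFinsupp', i.2]
  · intro f hf
    rw [← Fin.prod_univ_eq_prod_range (fun i => PowerSeries.coeff (f i) GAux)]
    exact Finset.prod_congr rfl fun i _ => by simp [GAux, PowerSeries.coeff_mk]

lemma coeff_GAux_pow_filter (l n : ℕ) :
    PowerSeries.coeff (R := Polynomial ℚ) n (GAux ^ l) =
      ∑ s ∈ (Finset.Nat.antidiagonalTuple l n).filter (fun s => ∀ i, 1 ≤ s i),
        ∏ i, ((X - 1) ^ (s i - 1) * C (((s i).factorial : ℚ)⁻¹)) := by
  rw [coeff_GAux_pow, Finset.sum_filter]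
  refine Finset.sum_congr rfl fun s _ => ?_
  by_cases h : ∀ i, 1 ≤ s i
  · rw [if_pos h]
    refine Finset.prod_congr rfl fun i _ => ?_
    have : s i ≠ 0 := Nat.one_le_iff_ne_zero.mp (h i)
    simp [gAux, this]
  · rw [if_neg h]
    push_neg at h
    obtain ⟨i, hi⟩ := h
    have hz : s i = 0 := by omega
    exact Finset.prod_eq_zero (Finset.mem_univ i) (by simp [gAux, hz])

lemma coeff_GAux_pow_zero {l n : ℕ} (h : n < l) :
    PowerSeries.coeff (R := Polynomial ℚ) n (GAux ^ l) = 0 := by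
  rw [coeff_GAux_pow_filter]
  refine Finset.sum_eq_zero fun s hs => ?_
  exfalso
  rw [Finset.mem_filter, Finset.Nat.mem_antidiagonalTuple] at hs
  have hln : l ≤ n := by
    calc l = ∑ _i : Fin l, 1 := by simp
    _ ≤ ∑ i, s i := Finset.sum_le_sum fun i _ => hs.2 i
    _ = n := hs.1
  omega

lemma coeff_FAux (n N : ℕ) (h : n ≤ N) :
    PowerSeries.coeff (R := Polynomial ℚ) n (PowerSeries.mk (fun n =>
        if n = 0 then (1 : Polynomial ℚ) else ((n.factorial : ℚ))⁻¹ • pPoly n)) =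
      PowerSeries.coeff (R := Polynomial ℚ) n (∑ l ∈ Finset.range (N + 1), GAux ^ l) := by
  rw [PowerSeries.coeff_mk, map_sum]
  rcases Nat.eq_zero_or_pos n with rfl | hn
  · rw [if_pos rfl, Finset.sum_eq_single 0]
    · simp
    · intro l _ hl
      exact coeff_GAux_pow_zero (Nat.pos_of_ne_zero hl)
    · intro hc
      exact absurd (Finset.mem_range.mpr (Nat.succ_pos N)) hc
  · rw [if_neg hn.ne']
    have hsub : Finset.Icc 1 n ⊆ Finset.range (N + 1) := fun l hl => by
      rw [Finset.mem_Icc] at hl; rw [Finset.mem_range]; omega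
    rw [← Finset.sum_subset hsub ?_]
    · rw [pPoly, smul_smul, inv_mul_cancel₀ (by exact_mod_cast n.factorial_ne_zero), one_smul]
      exact Finset.sum_congr rfl fun l _ => (coeff_GAux_pow_filter l n).symm
    · intro l hl hnot
      rw [Finset.mem_Icc] at hnot
      push_neg at hnot
      rcases Nat.eq_zero_or_pos l with rfl | hl1
      · simpa [PowerSeries.coeff_one] using hn.ne'
      · exact coeff_GAux_pow_zero (hnot hl1)

/-- The generating series identity
`(q − e^{(q−1)y}) · (1 + ∑_{n≥1} (p_n(q)/n!) y^n) = q − 1` in `ℚ[q][[y]]`. -/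
theorem stmt_4 :
    (PowerSeries.C (R := Polynomial ℚ) X -
        PowerSeries.mk (fun kk => (X - 1) ^ kk * C (((kk.factorial : ℚ))⁻¹))) *
      PowerSeries.mk (fun n =>
        if n = 0 then (1 : Polynomial ℚ) else ((n.factorial : ℚ))⁻¹ • pPoly n)
      = PowerSeries.C (R := Polynomial ℚ) (X - 1) := by
  have h1 : PowerSeries.C (R := Polynomial ℚ) X -
      PowerSeries.mk (fun kk => (X - 1) ^ kk * C (((kk.factorial : ℚ))⁻¹)) =
      PowerSeries.C (R := Polynomial ℚ) (X - 1) * (1 - GAux) := by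
    refine PowerSeries.ext fun n => ?_
    rw [map_sub, PowerSeries.coeff_C_mul, map_sub]
    cases n with
    | zero =>
      simp [GAux, gAux, PowerSeries.coeff_mk, PowerSeries.coeff_one, PowerSeries.coeff_C]
    | succ k =>
      simp only [GAux, gAux, PowerSeries.coeff_mk, PowerSeries.coeff_one, PowerSeries.coeff_C,
        Nat.succ_ne_zero, if_false, Nat.add_sub_cancel]
      rw [pow_succ]
      ring
  have h2 : (1 - GAux) * PowerSeries.mk (fun n =>
      if n = 0 then (1 : Polynomial ℚ) else ((n.factorial : ℚ))⁻¹ • pPoly n) = 1 := by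
    refine PowerSeries.ext fun n => ?_
    have hsum : ∀ p ∈ Finset.HasAntidiagonal.antidiagonal n,
        PowerSeries.coeff (R := Polynomial ℚ) p.1 (1 - GAux) *
          PowerSeries.coeff (R := Polynomial ℚ) p.2 (PowerSeries.mk (fun n =>
            if n = 0 then (1 : Polynomial ℚ) else ((n.factorial : ℚ))⁻¹ • pPoly n)) =
        PowerSeries.coeff (R := Polynomial ℚ) p.1 (1 - GAux) *
          PowerSeries.coeff (R := Polynomial ℚ) p.2 (∑ l ∈ Finset.range (n + 1), GAux ^ l) := by
      intro p hp
      rw [Finset.HasAntidiagonal.mem_antidiagonal] at hp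
      rw [coeff_FAux p.2 n (by omega)]
    rw [PowerSeries.coeff_mul, Finset.sum_congr rfl hsum, ← PowerSeries.coeff_mul]
    have hg : (1 - GAux) * ∑ l ∈ Finset.range (n + 1), GAux ^ l = 1 - GAux ^ (n + 1) := by
      rw [← neg_sub GAux 1, neg_mul, mul_geom_sum, neg_sub]
    rw [hg, map_sub, coeff_GAux_pow_zero (Nat.lt_succ_self n), sub_zero]
  rw [h1, mul_assoc, h2, mul_one]
end

section
/- Let k be a commutative ring, B a finite set, and R_B the polynomial ring over k with one indeterminate l_σ for every 2-partition σ of B. Let I_B be the ideal generated by the elements r^(1)_{ij} = ∑_{σ: iσj} l_σ − ∑_{σ: jσi} l_σ (over all i ≠ j in B) and the products l_σ l_τ whenever there exist i,j with iσj and jτi. For an ordered partition τ of B of length N+1, let m(τ) be the product of the l_{σ^(a)} over its associated good family of 2-partitions, with m of the trivial 1-partition equal to 1. Then the images of the good monomials m(τ), over all ordered partitions τ of B, span R_B/I_B as a k-module. -/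
/-- A 2-partition of `α`, encoded by its first component: a nonempty proper subset. -/
abbrev TwoPart (α : Type) [Fintype α] [DecidableEq α] :=
  {s : Finset α // s.Nonempty ∧ s ≠ Finset.univ}

/-- The ideal `I_B`, generated by the linear relations `r¹_{ij}` and the quadratic
relations `l_σ l_τ` for incompatible pairs `σ, τ`. -/
noncomputable def IB (α : Type) [Fintype α] [DecidableEq α]
    (k : Type) [CommRing k] : Ideal (MvPolynomial (TwoPart α) k) :=
  Ideal.span
    ({x | ∃ i j : α, i ≠ j ∧ x =
        (∑ σ : TwoPart α, if i ∈ σ.val ∧ j ∉ σ.val then MvPolynomial.X σ else 0) -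
        (∑ σ : TwoPart α, if j ∈ σ.val ∧ i ∉ σ.val then MvPolynomial.X σ else 0)} ∪
     {x | ∃ σ τ : TwoPart α,
        (∃ i j : α, i ∈ σ.val ∧ j ∉ σ.val ∧ j ∈ τ.val ∧ i ∉ τ.val) ∧
        x = MvPolynomial.X σ * MvPolynomial.X τ})

open MvPolynomial

set_option linter.unusedSectionVars false
set_option maxHeartbeats 2000000

section Main

variable {α : Type} [Fintype α] [DecidableEq α] {k : Type} [CommRing k]

/-- Compatibility of two 2-partitions. -/
def Compat (σ τ : TwoPart α) : Prop := σ.val ⊆ τ.val ∨ τ.val ⊆ σ.val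

lemma quad_mem {σ τ : TwoPart α} (h : ¬ Compat σ τ) :
    (X σ * X τ : MvPolynomial (TwoPart α) k) ∈ IB α k := by
  apply Ideal.subset_span
  right
  rw [Compat, not_or] at h
  obtain ⟨h1, h2⟩ := h
  obtain ⟨a, ha, ha'⟩ := Finset.not_subset.mp h1
  obtain ⟨b, hb, hb'⟩ := Finset.not_subset.mp h2
  exact ⟨σ, τ, ⟨a, b, ha, hb', hb, ha'⟩, rfl⟩

lemma lin_mem {i j : α} (hij : i ≠ j) :
    ((∑ σ : TwoPart α, if i ∈ σ.val ∧ j ∉ σ.val then X σ else 0) -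
     (∑ σ : TwoPart α, if j ∈ σ.val ∧ i ∉ σ.val then X σ else 0) :
      MvPolynomial (TwoPart α) k) ∈ IB α k := by
  apply Ideal.subset_span
  left
  exact ⟨i, j, hij, rfl⟩

lemma Xmul_mem {σ τ : TwoPart α} {w : Multiset (TwoPart α)} (hτ : τ ∈ w)
    (h : ¬ Compat σ τ) :
    (X σ * ((w.map X).prod : MvPolynomial (TwoPart α) k)) ∈ IB α k := by
  have h1 : w = τ ::ₘ w.erase τ := (Multiset.cons_erase hτ).symm
  rw [h1, Multiset.map_cons, Multiset.prod_cons, ← mul_assoc]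
  exact Ideal.mul_mem_right _ _ (quad_mem h)

lemma prod_mem_of_incompat {σ τ : TwoPart α} {m : Multiset (TwoPart α)}
    (hσ : σ ∈ m) (hτ : τ ∈ m.erase σ) (h : ¬ Compat σ τ) :
    ((m.map X).prod : MvPolynomial (TwoPart α) k) ∈ IB α k := by
  have h1 : m = σ ::ₘ m.erase σ := (Multiset.cons_erase hσ).symm
  rw [h1, Multiset.map_cons, Multiset.prod_cons]
  exact Xmul_mem hτ h

lemma exists_sorted (m : Multiset (TwoPart α)) (hnd : m.Nodup)
    (hch : ∀ σ ∈ m, ∀ τ ∈ m, Compat σ τ) :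
    ∃ l : List (TwoPart α), (l : Multiset (TwoPart α)) = m ∧
      l.Chain' (fun σ τ => σ.val ⊂ τ.val) := by
  induction m using Multiset.strongInductionOn with
  | _ m ih =>
    rcases eq_or_ne m 0 with rfl | hm0
    · exact ⟨[], rfl, List.isChain_nil⟩
    · -- find the least element
      have hFne : (m.toFinset.image Subtype.val).Nonempty := by
        simp [Finset.image_nonempty, Multiset.toFinset_nonempty, hm0]
      obtain ⟨v, hv, hvmin⟩ : ∃ v ∈ m.toFinset.image Subtype.val, ∀ x ∈ m.toFinset.image Subtype.val, ¬ x < v := by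
        obtain ⟨v, hv⟩ := Finset.exists_minimal hFne
        exact ⟨v, hv.1, fun x hx hlt => lt_irrefl _ (lt_of_lt_of_le hlt (hv.2 hx hlt.le))⟩
      obtain ⟨σ, hσF, hσv⟩ := Finset.mem_image.mp hv
      have hσm : σ ∈ m := Multiset.mem_toFinset.mp hσF
      have hleast : ∀ τ ∈ m, σ.val ⊆ τ.val := by
        intro τ hτ
        rcases hch σ hσm τ hτ with h | h
        · exact h
        · rcases eq_or_ne τ.val σ.val with he | hne
          · exact he.ge
          · refine absurd ?_
              (hvmin τ.val (Finset.mem_image.mpr ⟨τ, Multiset.mem_toFinset.mpr hτ, rfl⟩))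
            rw [← hσv]
            exact lt_of_le_of_ne h hne
      have herlt : m.erase σ < m := Multiset.erase_lt.mpr hσm
      obtain ⟨l', hl'm, hl'c⟩ := ih (m.erase σ) herlt (hnd.erase σ)
        (fun a ha b hb => hch a (Multiset.mem_of_mem_erase ha) b (Multiset.mem_of_mem_erase hb))
      refine ⟨σ :: l', ?_, ?_⟩
      · show σ ::ₘ (l' : Multiset (TwoPart α)) = m
        rw [hl'm]; exact Multiset.cons_erase hσm
      · cases l' with
        | nil => exact List.isChain_singleton σ
        | cons b t =>
          refine List.isChain_cons_cons.mpr ⟨?_, hl'c⟩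
          have hbm : b ∈ m.erase σ := by
            rw [← hl'm]; simp
          have hbσ : b ≠ σ := fun h => (Multiset.Nodup.notMem_erase hnd) (h ▸ hbm)
          exact lt_of_le_of_ne (hleast b (Multiset.mem_of_mem_erase hbm))
            (fun h => hbσ (Subtype.ext h.symm))

end Main

section ListPart
variable {α : Type} [Fintype α] [DecidableEq α] [Nonempty α]
variable (l : List (TwoPart α)) (hl : l.Chain' (fun σ τ => σ.val ⊂ τ.val))

/-- Auxiliary increasing family: `∅`, the sets of the chain, then `univ`. -/
def AA (l : List (TwoPart α)) : ℕ → Finset α := fun t =>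
  if t = 0 then ∅ else (l.map Subtype.val).getD (t-1) Finset.univ

lemma AA_zero : AA l 0 = ∅ := rfl

lemma AA_get (t : ℕ) (h : t < l.length) : AA l (t+1) = (l.get ⟨t, h⟩).val := by
  have h' : t < (l.map Subtype.val).length := by rw [List.length_map]; exact h
  show (if t+1 = 0 then (∅ : Finset α) else (l.map Subtype.val).getD (t+1-1) Finset.univ) = _
  rw [if_neg (by omega)]
  simp only [Nat.add_sub_cancel]
  rw [List.getD_eq_getElem _ _ h', List.getElem_map]
  rfl

lemma AA_big (t : ℕ) (h : l.length < t) : AA l t = Finset.univ := by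
  have h0 : t ≠ 0 := by omega
  have h' : (l.map Subtype.val).length ≤ t - 1 := by rw [List.length_map]; omega
  show (if t = 0 then (∅ : Finset α) else (l.map Subtype.val).getD (t-1) Finset.univ) = _
  rw [if_neg h0, List.getD_eq_default _ _ h']

include hl

lemma AA_step (t : ℕ) (ht : t ≤ l.length) : AA l t ⊂ AA l (t+1) := by
  rcases Nat.eq_zero_or_pos t with rfl | htpos
  · rcases Nat.eq_zero_or_pos l.length with h0 | h0
    · rw [AA_zero, AA_big l 1 (by omega)]
      exact Finset.empty_ssubset.mpr Finset.univ_nonempty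
    · rw [AA_zero, AA_get l 0 h0]
      exact Finset.empty_ssubset.mpr (l.get ⟨0, h0⟩).prop.1
  · rcases eq_or_lt_of_le ht with he | hlt
    · rw [AA_big l (t+1) (by omega)]
      have h1 : t - 1 < l.length := by omega
      rw [show t = (t-1)+1 by omega, AA_get l (t-1) h1]
      exact Finset.ssubset_univ_iff.mpr (l.get ⟨t-1, h1⟩).prop.2
    · have h1 : t - 1 < l.length := by omega
      rw [show t = (t-1)+1 by omega, AA_get l (t-1) h1]
      rw [show (t-1)+1+1 = ((t-1)+1)+1 from rfl, AA_get l ((t-1)+1) (by omega)]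
      exact List.isChain_iff_getElem.mp hl (t-1) (by omega)

lemma AA_mono {s t : ℕ} (hst : s ≤ t) : AA l s ⊆ AA l t := by
  induction t with
  | zero => rw [Nat.le_zero.mp hst]
  | succ t ih =>
    rcases Nat.eq_or_lt_of_le hst with rfl | h
    · rfl
    · have hs : s ≤ t := by omega
      refine (ih hs).trans ?_
      rcases Nat.lt_or_ge l.length t with h1 | h1
      swap
      · exact (AA_step l hl t h1).subset
      · rw [AA_big l t h1, AA_big l (t+1) (by omega)]

/-- Construction of the ordered partition data from a sorted chain. -/
lemma chain_good :
    ∃ (τ : Fin (l.length + 1) → Finset α),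
      (∀ i, (τ i).Nonempty) ∧ (∀ i j, i ≠ j → Disjoint (τ i) (τ j)) ∧
      Finset.univ.biUnion τ = Finset.univ ∧
      (∀ a : Fin l.length, (l.get a).val =
        (Finset.univ.filter (fun b : Fin (l.length + 1) => b.val ≤ a.val)).biUnion τ) := by
  set N := l.length with hN
  set τ : Fin (N+1) → Finset α := fun b => AA l (b.val+1) \ AA l b.val with hτ
  have hpre : ∀ a : ℕ, a ≤ N →
      (Finset.univ.filter (fun b : Fin (N+1) => b.val ≤ a)).biUnion τ = AA l (a+1) := by
    intro a
    induction a with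
    | zero =>
      intro _
      have hf : (Finset.univ.filter (fun b : Fin (N+1) => b.val ≤ 0)) = {(0 : Fin (N+1))} := by
        ext b
        simp only [Finset.mem_filter, Finset.mem_univ, true_and, Finset.mem_singleton, Fin.ext_iff, Fin.val_zero]; omega
      rw [hf, Finset.singleton_biUnion]
      simp [hτ, AA_zero]
    | succ a iha =>
      intro h
      have ha : a ≤ N := by omega
      have hsplit : (Finset.univ.filter (fun b : Fin (N+1) => b.val ≤ a+1)) =
          insert (⟨a+1, by omega⟩ : Fin (N+1))
            (Finset.univ.filter (fun b : Fin (N+1) => b.val ≤ a)) := by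
        ext b
        simp only [Finset.mem_filter, Finset.mem_univ, true_and, Finset.mem_insert, Fin.ext_iff]
        omega
      rw [hsplit, Finset.biUnion_insert, iha ha]
      show AA l (a+1+1) \ AA l (a+1) ∪ AA l (a+1) = AA l (a+1+1)
      exact Finset.sdiff_union_of_subset (AA_mono l hl (by omega))
  refine ⟨τ, ?_, ?_, ?_, ?_⟩
  · intro b
    have := AA_step l hl b.val (by have := b.isLt; omega)
    obtain ⟨x, hx1, hx2⟩ := Finset.exists_of_ssubset this
    exact ⟨x, Finset.mem_sdiff.mpr ⟨hx1, hx2⟩⟩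
  · have haux : ∀ i j : Fin (N+1), i.val < j.val → Disjoint (τ i) (τ j) := by
      intro i j hij
      rw [Finset.disjoint_left]
      intro x hxi hxj
      have h1 : x ∈ AA l (i.val+1) := (Finset.mem_sdiff.mp hxi).1
      have h2 : x ∉ AA l j.val := (Finset.mem_sdiff.mp hxj).2
      exact h2 (AA_mono l hl (show i.val+1 ≤ j.val by omega) h1)
    intro i j hij
    rcases Nat.lt_or_ge i.val j.val with h | h
    · exact haux i j h
    · have : j.val < i.val := by
        rcases Nat.eq_or_lt_of_le h with he | hlt
        · exact absurd (Fin.ext he.symm) hij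
        · exact hlt
      exact (haux j i this).symm
  · have hf : (Finset.univ.filter (fun b : Fin (N+1) => b.val ≤ N)) = Finset.univ := by
      ext b
      simp [Nat.lt_succ_iff.mp b.isLt]
    rw [← hf, hpre N le_rfl, AA_big l (N+1) (by omega)]
  · intro a
    rw [hpre a.val (by omega), AA_get l a.val a.isLt]

end ListPart

section Key

variable {α : Type} [Fintype α] [DecidableEq α] [Nonempty α] {k : Type} [CommRing k]

/-- The set of images of good monomials. -/
def GoodSet (α : Type) [Fintype α] [DecidableEq α] (k : Type) [CommRing k] :
    Set (MvPolynomial (TwoPart α) k ⧸ IB α k) :=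
  {x : MvPolynomial (TwoPart α) k ⧸ IB α k |
    ∃ (N : ℕ) (τ : Fin (N + 1) → Finset α),
      (∀ i, (τ i).Nonempty) ∧ (∀ i j, i ≠ j → Disjoint (τ i) (τ j)) ∧
      Finset.univ.biUnion τ = Finset.univ ∧
      ∃ g : Fin N → TwoPart α,
        (∀ a : Fin N, (g a).val =
          (Finset.univ.filter (fun b : Fin (N + 1) => b.val ≤ a.val)).biUnion τ) ∧
        x = Ideal.Quotient.mk (IB α k) (∏ a : Fin N, MvPolynomial.X (g a))}

lemma good_mem (m : Multiset (TwoPart α)) (hnd : m.Nodup)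
    (hch : ∀ σ ∈ m, ∀ τ ∈ m, Compat σ τ) :
    Ideal.Quotient.mk (IB α k) ((m.map X).prod) ∈ GoodSet α k := by
  obtain ⟨l, hlm, hlc⟩ := exists_sorted m hnd hch
  obtain ⟨τ, h1, h2, h3, h4⟩ := chain_good l hlc
  refine ⟨l.length, τ, h1, h2, h3, l.get, fun a => h4 a, ?_⟩
  congr 1
  rw [← hlm]
  calc ((l : Multiset (TwoPart α)).map X).prod
      = ((l.map X : List (MvPolynomial (TwoPart α) k)) : Multiset _).prod := by
        rw [Multiset.map_coe]
    _ = (l.map X).prod := Multiset.prod_coe _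
    _ = ∏ a : Fin l.length, X (l.get a) := by
        conv_lhs => rw [← List.ofFn_get l]
        rw [List.map_ofFn, List.prod_ofFn]
        rfl

lemma key_s12 (n : ℕ) : ∀ (m : Multiset (TwoPart α)),
    Multiset.card m - m.toFinset.card ≤ n →
    Ideal.Quotient.mk (IB α k) ((m.map X).prod) ∈ Submodule.span k (GoodSet α k) := by
  induction n with
  | zero =>
    intro m hm
    by_cases hbad : ∃ σ ∈ m, ∃ τ ∈ m.erase σ, ¬ Compat σ τ
    · obtain ⟨σ, hσ, τ, hτ, hc⟩ := hbad
      rw [Ideal.Quotient.eq_zero_iff_mem.mpr (prod_mem_of_incompat hσ hτ hc)]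
      exact Submodule.zero_mem _
    · push_neg at hbad
      have hch : ∀ σ ∈ m, ∀ τ ∈ m, Compat σ τ := by
        intro σ hσ τ hτ
        rcases eq_or_ne τ σ with rfl | hne
        · exact Or.inl subset_rfl
        · exact hbad σ hσ τ ((Multiset.mem_erase_of_ne hne).mpr hτ)
      have hcard : Multiset.card m ≤ m.toFinset.card := by omega
      have hdedup : Multiset.card m ≤ Multiset.card m.dedup := by
        rwa [Multiset.card_toFinset] at hcard
      have hnd : m.Nodup := by
        have := Multiset.eq_of_le_of_card_le (Multiset.dedup_le m) hdedup
        rw [← this]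
        exact Multiset.nodup_dedup m
      exact Submodule.subset_span (good_mem m hnd hch)
  | succ n ih =>
    intro m hm
    by_cases hbad : ∃ σ ∈ m, ∃ τ ∈ m.erase σ, ¬ Compat σ τ
    · obtain ⟨σ, hσ, τ, hτ, hc⟩ := hbad
      rw [Ideal.Quotient.eq_zero_iff_mem.mpr (prod_mem_of_incompat hσ hτ hc)]
      exact Submodule.zero_mem _
    push_neg at hbad
    have hch : ∀ σ ∈ m, ∀ τ ∈ m, Compat σ τ := by
      intro σ hσ τ hτ
      rcases eq_or_ne τ σ with rfl | hne
      · exact Or.inl subset_rfl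
      · exact hbad σ hσ τ ((Multiset.mem_erase_of_ne hne).mpr hτ)
    by_cases hnd : m.Nodup
    · exact Submodule.subset_span (good_mem m hnd hch)
    obtain ⟨V, hV2⟩ : ∃ V, 1 < Multiset.count V m := by
      by_contra hc
      push_neg at hc
      exact hnd (Multiset.nodup_iff_count_le_one.mpr hc)
    have hVm : V ∈ m := by
      rw [← Multiset.count_pos]; omega
    have hVm₀ : V ∈ m.erase V := by
      rw [← Multiset.count_pos, Multiset.count_erase_self]; omega
    -- choose i
    have hD : ∃ i ∈ V.val, ∀ ρ ∈ m, ρ.val ⊂ V.val → i ∉ ρ.val := by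
      by_cases hb : (m.toFinset.filter (fun ρ => ρ.val ⊂ V.val)).Nonempty
      · obtain ⟨w, hw, hwmax⟩ : ∃ w ∈ (m.toFinset.filter (fun ρ : TwoPart α => ρ.val ⊂ V.val)).image Subtype.val,
            ∀ x ∈ (m.toFinset.filter (fun ρ : TwoPart α => ρ.val ⊂ V.val)).image Subtype.val, ¬ w < x := by
          obtain ⟨w, hw⟩ := Finset.exists_maximal (hb.image Subtype.val)
          exact ⟨w, hw.1, fun x hx hlt => lt_irrefl _ (lt_of_le_of_lt (hw.2 hx hlt.le) hlt)⟩
        obtain ⟨ρm, hρm, hρv⟩ := Finset.mem_image.mp hw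
        obtain ⟨hρmm, hρmsub⟩ := Finset.mem_filter.mp hρm
        have hwV : w ⊂ V.val := hρv ▸ hρmsub
        obtain ⟨i, hi1, hi2⟩ := Finset.exists_of_ssubset hwV
        refine ⟨i, hi1, ?_⟩
        intro ρ hρ hsub hiρ
        have hρf : ρ.val ∈ (m.toFinset.filter (fun ρ => ρ.val ⊂ V.val)).image Subtype.val :=
          Finset.mem_image.mpr ⟨ρ, Finset.mem_filter.mpr
            ⟨Multiset.mem_toFinset.mpr hρ, hsub⟩, rfl⟩
        rcases hch ρ hρ ρm (Multiset.mem_toFinset.mp hρmm) with h | h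
        · rw [hρv] at h
          rcases eq_or_ne ρ.val w with he | hne
          · exact hi2 (he ▸ hiρ)
          · exact hi2 (h hiρ)
        · rw [hρv] at h
          rcases eq_or_ne ρ.val w with he | hne
          · exact hi2 (he ▸ hiρ)
          · exact hwmax ρ.val hρf (lt_of_le_of_ne h (Ne.symm hne))
      · obtain ⟨i, hi⟩ := V.prop.1
        refine ⟨i, hi, fun ρ hρ hsub _ => hb ⟨ρ, Finset.mem_filter.mpr
          ⟨Multiset.mem_toFinset.mpr hρ, hsub⟩⟩⟩
    -- choose j
    have hE : ∃ j, j ∉ V.val ∧ ∀ ρ ∈ m, V.val ⊂ ρ.val → j ∈ ρ.val := by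
      by_cases hb : (m.toFinset.filter (fun ρ => V.val ⊂ ρ.val)).Nonempty
      · obtain ⟨w, hw, hwmin⟩ : ∃ w ∈ (m.toFinset.filter (fun ρ : TwoPart α => V.val ⊂ ρ.val)).image Subtype.val,
            ∀ x ∈ (m.toFinset.filter (fun ρ : TwoPart α => V.val ⊂ ρ.val)).image Subtype.val, ¬ x < w := by
          obtain ⟨w, hw⟩ := Finset.exists_minimal (hb.image Subtype.val)
          exact ⟨w, hw.1, fun x hx hlt => lt_irrefl _ (lt_of_lt_of_le hlt (hw.2 hx hlt.le))⟩
        obtain ⟨ρm, hρm, hρv⟩ := Finset.mem_image.mp hw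
        obtain ⟨hρmm, hρmsub⟩ := Finset.mem_filter.mp hρm
        have hwV : V.val ⊂ w := hρv ▸ hρmsub
        obtain ⟨j, hj1, hj2⟩ := Finset.exists_of_ssubset hwV
        refine ⟨j, hj2, ?_⟩
        intro ρ hρ hsub
        have hρf : ρ.val ∈ (m.toFinset.filter (fun ρ => V.val ⊂ ρ.val)).image Subtype.val :=
          Finset.mem_image.mpr ⟨ρ, Finset.mem_filter.mpr
            ⟨Multiset.mem_toFinset.mpr hρ, hsub⟩, rfl⟩
        rcases hch ρ hρ ρm (Multiset.mem_toFinset.mp hρmm) with h | h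
        · rcases eq_or_ne ρ.val w with he | hne
          · exact he ▸ hj1
          · rw [hρv] at h
            exact absurd (lt_of_le_of_ne h hne) (hwmin ρ.val hρf)
        · rw [hρv] at h
          exact h hj1
      · have : ∃ j, j ∉ V.val := by
          by_contra hc
          push_neg at hc
          exact V.prop.2 (Finset.eq_univ_iff_forall.mpr hc)
        obtain ⟨j, hj⟩ := this
        refine ⟨j, hj, fun ρ hρ hsub => absurd ⟨ρ, Finset.mem_filter.mpr
          ⟨Multiset.mem_toFinset.mpr hρ, hsub⟩⟩ hb⟩
    obtain ⟨i, hiV, hiD⟩ := hD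
    obtain ⟨j, hjV, hjE⟩ := hE
    have hij : i ≠ j := fun h => hjV (h ▸ hiV)
    set mk0 := Ideal.Quotient.mk (IB α k) with hmk0
    set M₀ : MvPolynomial (TwoPart α) k := ((m.erase V).map X).prod with hM₀
    set P1 : MvPolynomial (TwoPart α) k :=
      ∑ σ : TwoPart α, if i ∈ σ.val ∧ j ∉ σ.val then X σ else 0 with hP1
    set P2 : MvPolynomial (TwoPart α) k :=
      ∑ σ : TwoPart α, if j ∈ σ.val ∧ i ∉ σ.val then X σ else 0 with hP2
    have h12 : mk0 (M₀ * P1) = mk0 (M₀ * P2) := by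
      rw [Ideal.Quotient.eq, ← mul_sub]
      exact Ideal.mul_mem_left _ _ (lin_mem hij)
    have h2zero : mk0 (M₀ * P2) = 0 := by
      rw [Ideal.Quotient.eq_zero_iff_mem, hP2, Finset.mul_sum]
      apply Ideal.sum_mem
      intro σ _
      rw [mul_ite, mul_zero]
      split_ifs with hσc
      · rw [mul_comm]
        refine Xmul_mem hVm₀ ?_
        rintro (h | h)
        · exact hjV (h hσc.1)
        · exact hσc.2 (h hiV)
      · exact Ideal.zero_mem _
    set F : TwoPart α → MvPolynomial (TwoPart α) k ⧸ IB α k :=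
      fun σ => mk0 ((if i ∈ σ.val ∧ j ∉ σ.val then X σ else 0) * M₀) with hF
    have hsum : ∑ σ : TwoPart α, F σ = mk0 (M₀ * P1) := by
      rw [hP1, Finset.mul_sum, map_sum]
      apply Finset.sum_congr rfl
      intro σ _
      rw [hF, mul_comm]
    have hFV : F V = mk0 ((m.map X).prod) := by
      have hcond : i ∈ V.val ∧ j ∉ V.val := ⟨hiV, hjV⟩
      simp only [hF, if_pos hcond]
      congr 1
      rw [hM₀, ← Multiset.prod_cons, ← Multiset.map_cons, Multiset.cons_erase hVm]
    have hsplit : ∑ σ ∈ Finset.univ.erase V, F σ + F V = ∑ σ : TwoPart α, F σ :=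
      Finset.sum_erase_add _ _ (Finset.mem_univ V)
    have hmain : mk0 ((m.map X).prod) = - ∑ σ ∈ Finset.univ.erase V, F σ := by
      rw [← hFV]
      have h0 := hsplit
      rw [hsum, h12, h2zero] at h0
      rw [add_comm] at h0
      exact eq_neg_of_add_eq_zero_left h0
    rw [hmain]
    apply Submodule.neg_mem
    apply Submodule.sum_mem
    intro σ hσe
    have hσV : σ ≠ V := (Finset.mem_erase.mp hσe).1
    simp only [hF]
    by_cases hc : i ∈ σ.val ∧ j ∉ σ.val
    swap
    · rw [if_neg hc, zero_mul, map_zero]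
      exact Submodule.zero_mem _
    rw [if_pos hc]
    by_cases hcmp : ∀ ρ ∈ m.erase V, Compat σ ρ
    · -- new chain monomial, apply induction hypothesis
      have hσnot : σ ∉ m.toFinset := by
        intro hmem
        have hσm : σ ∈ m := Multiset.mem_toFinset.mp hmem
        rcases hcmp V hVm₀ with h | h
        · have hss : σ.val ⊂ V.val :=
            lt_of_le_of_ne h (fun he => hσV (Subtype.ext he))
          exact hiD σ hσm hss hc.1
        · have hss : V.val ⊂ σ.val :=
            lt_of_le_of_ne h (fun he => hσV (Subtype.ext he.symm))
          exact hc.2 (hjE σ hσm hss)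
      have hcard : Multiset.card (σ ::ₘ m.erase V) = Multiset.card m := by
        rw [Multiset.card_cons, Multiset.card_erase_of_mem hVm]
        have : 0 < Multiset.card m := by
          rw [Multiset.card_pos]
          exact fun h0 => (by simp [h0] at hVm)
        exact Nat.succ_pred_eq_of_pos this
      have htf : (σ ::ₘ m.erase V).toFinset = insert σ m.toFinset := by
        rw [Multiset.toFinset_cons]
        congr 1
        ext x
        simp only [Multiset.mem_toFinset]
        constructor
        · exact Multiset.mem_of_mem_erase
        · intro hx
          rcases eq_or_ne x V with rfl | hne
          · exact hVm₀
          · exact (Multiset.mem_erase_of_ne hne).mpr hx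
      have hexc : Multiset.card (σ ::ₘ m.erase V) - (σ ::ₘ m.erase V).toFinset.card ≤ n := by
        rw [hcard, htf, Finset.card_insert_of_notMem hσnot]
        omega
      have hI := ih (σ ::ₘ m.erase V) hexc
      rw [Multiset.map_cons, Multiset.prod_cons] at hI
      exact hI
    · push_neg at hcmp
      obtain ⟨ρ, hρ, hρc⟩ := hcmp
      rw [Ideal.Quotient.eq_zero_iff_mem.mpr (Xmul_mem hρ hρc)]
      exact Submodule.zero_mem _

end Key

/-- The images of the good monomials `m(τ)`, over all ordered partitions `τ` of `B`,
span `R_B/I_B` as a `k`-module. Here `m(τ)` is the product of the variables attached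
to the good family of 2-partitions `σ^(a)_1 = τ_1 ∪ … ∪ τ_a` of an `(N+1)`-partition
`τ`, and the trivial 1-partition gives `m = 1` (empty product). -/
theorem stmt_12 {α : Type} [Fintype α] [DecidableEq α] [Nonempty α]
    {k : Type} [CommRing k] :
    Submodule.span k
      {x : MvPolynomial (TwoPart α) k ⧸ IB α k |
        ∃ (N : ℕ) (τ : Fin (N + 1) → Finset α),
          (∀ i, (τ i).Nonempty) ∧ (∀ i j, i ≠ j → Disjoint (τ i) (τ j)) ∧
          Finset.univ.biUnion τ = Finset.univ ∧
          ∃ g : Fin N → TwoPart α,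
            (∀ a : Fin N, (g a).val =
              (Finset.univ.filter (fun b : Fin (N + 1) => b.val ≤ a.val)).biUnion τ) ∧
            x = Ideal.Quotient.mk (IB α k) (∏ a : Fin N, MvPolynomial.X (g a))} = ⊤ := by
  have hGS : {x : MvPolynomial (TwoPart α) k ⧸ IB α k |
        ∃ (N : ℕ) (τ : Fin (N + 1) → Finset α),
          (∀ i, (τ i).Nonempty) ∧ (∀ i j, i ≠ j → Disjoint (τ i) (τ j)) ∧
          Finset.univ.biUnion τ = Finset.univ ∧
          ∃ g : Fin N → TwoPart α,
            (∀ a : Fin N, (g a).val =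
              (Finset.univ.filter (fun b : Fin (N + 1) => b.val ≤ a.val)).biUnion τ) ∧
            x = Ideal.Quotient.mk (IB α k) (∏ a : Fin N, MvPolynomial.X (g a))} =
      GoodSet α k := rfl
  rw [hGS, eq_top_iff]
  rintro x -
  obtain ⟨p, rfl⟩ := Ideal.Quotient.mk_surjective x
  -- every polynomial is in the span of products of variables
  have hR : p ∈ Submodule.span k
      (Set.range (fun m : Multiset (TwoPart α) => ((m.map X).prod : MvPolynomial (TwoPart α) k))) := by
    induction p using MvPolynomial.induction_on with
    | C a =>
      have h1 : (C a : MvPolynomial (TwoPart α) k) =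
          a • (((0 : Multiset (TwoPart α)).map X).prod) := by
        simp [MvPolynomial.smul_eq_C_mul]
      rw [h1]
      exact Submodule.smul_mem _ a (Submodule.subset_span ⟨0, rfl⟩)
    | add p q hp hq => exact Submodule.add_mem _ hp hq
    | mul_X p i hp =>
      refine Submodule.span_induction ?_ ?_ ?_ ?_ hp
      · rintro y ⟨m, rfl⟩
        apply Submodule.subset_span
        exact ⟨i ::ₘ m, by simp [Multiset.map_cons, Multiset.prod_cons, mul_comm]⟩
      · rw [zero_mul]; exact Submodule.zero_mem _
      · intro y z _ _ hy hz
        rw [add_mul]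
        exact Submodule.add_mem _ hy hz
      · intro a y _ hy
        rw [smul_mul_assoc]
        exact Submodule.smul_mem _ a hy
  refine Submodule.span_induction ?_ ?_ ?_ ?_ hR
  · rintro y ⟨m, rfl⟩
    exact key_s12 (Multiset.card m - m.toFinset.card) m le_rfl
  · rw [map_zero]; exact Submodule.zero_mem _
  · intro y z _ _ hy hz
    rw [map_add]
    exact Submodule.add_mem _ hy hz
  · intro a y _ hy
    have : Ideal.Quotient.mk (IB α k) (a • y) = a • Ideal.Quotient.mk (IB α k) y := by
      rw [← Ideal.Quotient.mkₐ_eq_mk k, map_smul]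
    rw [this]
    exact Submodule.smul_mem _ a hy
end

section
/- Let F be a vector space over a field k of characteristic zero and suppose given, for each n ≥ 1 and each function (a_1,...,a_n) with values in an index set I, elements ⟨Δ_{a_1}...Δ_{a_n}⟩ ∈ End F that are symmetric under permutations of the indices. Define for each ordered partition τ = (τ_1,...,τ_N) of {1,...,n} the element τ⟨Δ_{a_1}...Δ_{a_n}⟩ := ∏_{r=1}^{N} ⟨∏_{k ∈ τ_r} Δ_{a_k}⟩ (product in End F in the order of the parts). If the top correlators satisfy, for every n, indices (a_1,...,a_n), and i ≠ j ∈ {1,...,n}: ∑_{σ: iσj} ⟨∏_{k∈σ_1} Δ_{a_k}⟩·⟨∏_{k∈σ_2} Δ_{a_k}⟩ = ∑_{σ: jσi} ⟨∏_{k∈σ_1} Δ_{a_k}⟩·⟨∏_{k∈σ_2} Δ_{a_k}⟩ (σ running over 2-partitions of {1,...,n}), then for every ordered partition τ, every index a with |τ_a| ≥ 2, and every i ≠ j ∈ τ_a: ∑_{α: iαj} τ(α)⟨Δ_{a_1}...Δ_{a_n}⟩ = ∑_{α: jαi} τ(α)⟨Δ_{a_1}...Δ_{a_n}⟩, where α runs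 over 2-partitions of τ_a and τ(α) is the refinement of τ replacing τ_a by α. -/
section listAux
variable {M : Type*} [Monoid M]

lemma take_ofFn_congr {m : ℕ} (f g : Fin m → M) (p : ℕ)
    (h : ∀ c : Fin m, c.1 < p → f c = g c) :
    (List.ofFn f).take p = (List.ofFn g).take p := by
  apply List.ext_getElem
  · simp
  · intro t h1 h2
    simp only [List.length_take, List.length_ofFn] at h1
    simp only [List.getElem_take, List.getElem_ofFn]
    exact h _ (show t < p by omega)

lemma drop_ofFn_congr {m : ℕ} (f g : Fin m → M) (p : ℕ)
    (h : ∀ c : Fin m, p ≤ c.1 → f c = g c) :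
    (List.ofFn f).drop p = (List.ofFn g).drop p := by
  apply List.ext_getElem
  · simp
  · intro t h1 h2
    simp only [List.getElem_drop, List.getElem_ofFn]
    exact h _ (show p ≤ p + t by omega)

lemma prod_ofFn_split {N : ℕ} (f : Fin (N + 2) → M) (p : ℕ) (hp : p + 1 < N + 2) :
    (List.ofFn f).prod =
      ((List.ofFn f).take p).prod *
        (f ⟨p, Nat.lt_of_succ_lt hp⟩ * (f ⟨p + 1, hp⟩ * ((List.ofFn f).drop (p + 2)).prod)) := by
  conv_lhs => rw [← List.take_append_drop p (List.ofFn f)]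
  rw [List.prod_append]
  congr 1
  rw [List.drop_eq_getElem_cons (l := List.ofFn f) (i := p) (by simp; omega)]
  rw [List.drop_eq_getElem_cons (l := List.ofFn f) (i := p + 1) (by simp; omega)]
  rw [List.prod_cons, List.prod_cons, List.getElem_ofFn, List.getElem_ofFn]

end listAux


/-- The top correlator attached to a subset `s ⊆ Fin n` of index positions:
`⟨∏_{k∈s} Δ_{a_k}⟩`, well defined thanks to the symmetry of `D`. -/
noncomputable def DS {k F I : Type} [Field k] [AddCommGroup F] [Module k F]
    (D : ∀ n, (Fin n → I) → Module.End k F)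
    (n : ℕ) (a : Fin n → I) (s : Finset (Fin n)) : Module.End k F :=
  D s.card (fun t => a (s.orderIsoOfFin rfl t).val)

/-- The refinement `τ(α)` of an ordered partition `τ`, replacing the part with index `r`
by the two sets `s1, s2`. -/
def refine {γ : Type} {N : ℕ} (τ : Fin (N + 1) → Finset γ) (r : Fin (N + 1))
    (s1 s2 : Finset γ) : Fin (N + 2) → Finset γ := fun b =>
  if hb : b.val < r.val then τ ⟨b.val, by have := r.isLt; omega⟩
  else if b.val = r.val then s1
  else if b.val = r.val + 1 then s2
  else τ ⟨b.val - 1, by have := b.isLt; omega⟩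


lemma D_cast {α β : Type*} (D : ∀ n, (Fin n → α) → β) {k1 k2 : ℕ} (h : k1 = k2)
    (g : Fin k2 → α) : D k1 (fun t => g (Fin.cast h t)) = D k2 g := by
  subst h; rfl

lemma DS_map {k F I : Type} [Field k] [AddCommGroup F] [Module k F]
    (D : ∀ n, (Fin n → I) → Module.End k F) {n m : ℕ} (a : Fin n → I)
    (emb : Fin m ↪o Fin n) (s' : Finset (Fin m)) :
    DS D n a (s'.map emb.toEmbedding) = DS D m (fun t => a (emb t)) s' := by
  have hc : (s'.map emb.toEmbedding).card = s'.card := Finset.card_map _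
  have key : ∀ t : Fin (s'.map emb.toEmbedding).card,
      ((s'.map emb.toEmbedding).orderEmbOfFin rfl) t
        = emb (s'.orderEmbOfFin rfl (Fin.cast hc t)) := by
    have := (Finset.orderEmbOfFin_unique (s := s'.map emb.toEmbedding) rfl
      (f := fun t => emb (s'.orderEmbOfFin rfl (Fin.cast hc t)))
      (fun x => Finset.mem_map_of_mem _ (Finset.orderEmbOfFin_mem _ _ _))
      (emb.strictMono.comp ((s'.orderEmbOfFin rfl).strictMono.comp
        (fun x y hxy => hxy)))).symm
    exact fun t => congrFun this t
  show D _ _ = D _ _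
  calc D (s'.map emb.toEmbedding).card
        (fun t => a (((s'.map emb.toEmbedding).orderIsoOfFin rfl t) : Fin n))
      = D (s'.map emb.toEmbedding).card
        (fun t => a (emb ((s'.orderIsoOfFin rfl (Fin.cast hc t) : Fin m)))) := by
        congr 1; funext t
        rw [Finset.coe_orderIsoOfFin_apply, Finset.coe_orderIsoOfFin_apply, key]
    _ = D s'.card (fun t => a (emb ((s'.orderIsoOfFin rfl t : Fin m)))) :=
        D_cast D hc (fun t => a (emb ((s'.orderIsoOfFin rfl t : Fin m))))


lemma key_sum {k F I : Type} [Field k] [AddCommGroup F] [Module k F]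
    (D : ∀ n, (Fin n → I) → Module.End k F)
    (hquad : ∀ (n : ℕ) (a : Fin n → I) (i j : Fin n), i ≠ j →
      (∑ s : Finset (Fin n),
          if i ∈ s ∧ j ∉ s then DS D n a s * DS D n a sᶜ else 0) =
      (∑ s : Finset (Fin n),
          if j ∈ s ∧ i ∉ s then DS D n a s * DS D n a sᶜ else 0))
    {n : ℕ} (a : Fin n → I) (T : Finset (Fin n))
    (i j : Fin n) (hi : i ∈ T) (hj : j ∈ T) (hij : i ≠ j) :
    (∑ s : Finset (Fin n),
        if s ⊆ T ∧ i ∈ s ∧ j ∈ T \ s then DS D n a s * DS D n a (T \ s) else 0) =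
    (∑ s : Finset (Fin n),
        if s ⊆ T ∧ j ∈ s ∧ i ∈ T \ s then DS D n a s * DS D n a (T \ s) else 0) := by
  classical
  set m := T.card with hm
  set emb : Fin m ↪o Fin n := T.orderEmbOfFin rfl with hembdef
  have hrange : ∀ x : Fin n, x ∈ T → ∃ t : Fin m, emb t = x := by
    intro x hx
    have : x ∈ Set.range emb := by
      rw [hembdef, Finset.range_orderEmbOfFin]; exact hx
    exact this
  have hmemT : ∀ t : Fin m, emb t ∈ T := fun t => Finset.orderEmbOfFin_mem _ _ _
  have huniv : (Finset.univ : Finset (Fin m)).map emb.toEmbedding = T := by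
    ext x
    simp only [Finset.mem_map, Finset.mem_univ, true_and]
    constructor
    · rintro ⟨t, rfl⟩; exact hmemT t
    · exact hrange x
  have hmem : ∀ (s' : Finset (Fin m)) (x' : Fin m),
      emb x' ∈ s'.map emb.toEmbedding ↔ x' ∈ s' := by
    intro s' x'
    simp only [Finset.mem_map]
    constructor
    · rintro ⟨t, ht, he⟩; exact emb.toEmbedding.injective he ▸ ht
    · intro h; exact ⟨x', h, rfl⟩
  have hdiff : ∀ s' : Finset (Fin m),
      T \ s'.map emb.toEmbedding = s'ᶜ.map emb.toEmbedding := by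
    intro s'
    rw [← huniv]
    ext x
    simp only [Finset.mem_sdiff, Finset.mem_map, Finset.mem_univ, true_and,
      Finset.mem_compl]
    constructor
    · rintro ⟨⟨t, rfl⟩, h2⟩
      exact ⟨t, fun ht => h2 ⟨t, ht, rfl⟩, rfl⟩
    · rintro ⟨t, ht, rfl⟩
      exact ⟨⟨t, rfl⟩, fun hc => by
        obtain ⟨u, hu, he⟩ := hc
        exact ht (emb.toEmbedding.injective he ▸ hu)⟩
  set E : Finset (Fin m) ↪ Finset (Fin n) :=
    ⟨fun s' => s'.map emb.toEmbedding, fun s1 s2 h => Finset.map_injective _ h⟩ with hE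
  have transport : ∀ (x y : Fin n) (x' y' : Fin m), emb x' = x → emb y' = y → y ∈ T →
      (∑ s : Finset (Fin n),
          if s ⊆ T ∧ x ∈ s ∧ y ∈ T \ s then DS D n a s * DS D n a (T \ s) else 0)
      = (∑ s' : Finset (Fin m),
          if x' ∈ s' ∧ y' ∉ s' then
            DS D m (fun t => a (emb t)) s' * DS D m (fun t => a (emb t)) s'ᶜ else 0) := by
    rintro x y x' y' rfl rfl hymem
    have vanish : ∀ s ∈ (Finset.univ : Finset (Finset (Fin n))),
        s ∉ Finset.univ.map E →
        (if s ⊆ T ∧ emb x' ∈ s ∧ emb y' ∈ T \ s then DS D n a s * DS D n a (T \ s) else 0)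
          = 0 := by
      intro s _ hs
      rw [if_neg]
      rintro ⟨hsub, -, -⟩
      apply hs
      rw [Finset.mem_map]
      refine ⟨Finset.univ.filter (fun t => emb t ∈ s), Finset.mem_univ _, ?_⟩
      show (Finset.univ.filter (fun t => emb t ∈ s)).map emb.toEmbedding = s
      ext x0
      simp only [Finset.mem_map, Finset.mem_filter, Finset.mem_univ, true_and]
      constructor
      · rintro ⟨t, ht, rfl⟩; exact ht
      · intro hx0
        obtain ⟨t, rfl⟩ := hrange x0 (hsub hx0)
        exact ⟨t, hx0, rfl⟩
    calc (∑ s : Finset (Fin n),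
            if s ⊆ T ∧ emb x' ∈ s ∧ emb y' ∈ T \ s then DS D n a s * DS D n a (T \ s) else 0)
        = ∑ s ∈ Finset.univ.map E,
            (if s ⊆ T ∧ emb x' ∈ s ∧ emb y' ∈ T \ s then DS D n a s * DS D n a (T \ s) else 0) :=
          (Finset.sum_subset (Finset.subset_univ _) vanish).symm
      _ = ∑ s' : Finset (Fin m),
            (if E s' ⊆ T ∧ emb x' ∈ E s' ∧ emb y' ∈ T \ E s' then
              DS D n a (E s') * DS D n a (T \ E s') else 0) := Finset.sum_map _ _ _
      _ = _ := by
          refine Finset.sum_congr rfl fun s' _ => ?_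
          have hEs : E s' = s'.map emb.toEmbedding := rfl
          rw [hEs]
          have hsub : s'.map emb.toEmbedding ⊆ T :=
            huniv ▸ Finset.map_subset_map.mpr (Finset.subset_univ _)
          by_cases hcond : x' ∈ s' ∧ y' ∉ s'
          · rw [if_pos, if_pos hcond]
            · rw [hdiff s', DS_map, DS_map]
            · exact ⟨hsub, (hmem s' x').mpr hcond.1,
                Finset.mem_sdiff.mpr ⟨hymem, fun hc => hcond.2 ((hmem s' y').mp hc)⟩⟩
          · rw [if_neg, if_neg hcond]
            rintro ⟨-, hx2, hy2⟩
            exact hcond ⟨(hmem s' x').mp hx2,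
              fun hy' => (Finset.mem_sdiff.mp hy2).2 ((hmem s' y').mpr hy')⟩
  obtain ⟨i', hi'⟩ := hrange i hi
  obtain ⟨j', hj'⟩ := hrange j hj
  have hij' : i' ≠ j' := fun h => hij (by rw [← hi', ← hj', h])
  exact (transport i j i' j' hi' hj' hj).trans
    ((hquad m (fun t => a (emb t)) i' j' hij').trans
      (transport j i j' i' hj' hi' hi).symm)

/-- If the symmetric top correlators satisfy the quadratic relations
`∑_{σ: iσj} ⟨∏_{σ_1}Δ⟩⟨∏_{σ_2}Δ⟩ = ∑_{σ: jσi} ⟨∏_{σ_1}Δ⟩⟨∏_{σ_2}Δ⟩`, then the derived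
correlators `τ⟨Δ_{a_1}…Δ_{a_n}⟩ = ∏_r ⟨∏_{k∈τ_r}Δ_{a_k}⟩` satisfy, for every ordered
partition `τ`, every part `τ_r` and every `i ≠ j ∈ τ_r`, the linear relations
`∑_{α: iαj} τ(α)⟨…⟩ = ∑_{α: jαi} τ(α)⟨…⟩` with `α` running over 2-partitions of `τ_r`. -/
theorem stmt_18 {k F I : Type} [Field k] [CharZero k] [AddCommGroup F] [Module k F]
    (D : ∀ n, (Fin n → I) → Module.End k F)
    (hsym : ∀ (n : ℕ) (a : Fin n → I) (s : Equiv.Perm (Fin n)), D n (a ∘ s) = D n a)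
    (hquad : ∀ (n : ℕ) (a : Fin n → I) (i j : Fin n), i ≠ j →
      (∑ s : Finset (Fin n),
          if i ∈ s ∧ j ∉ s then DS D n a s * DS D n a sᶜ else 0) =
      (∑ s : Finset (Fin n),
          if j ∈ s ∧ i ∉ s then DS D n a s * DS D n a sᶜ else 0)) :
    ∀ (n : ℕ) (a : Fin n → I) (N : ℕ) (τ : Fin (N + 1) → Finset (Fin n)),
      (∀ r, (τ r).Nonempty) → (∀ r r', r ≠ r' → Disjoint (τ r) (τ r')) →
      Finset.univ.biUnion τ = Finset.univ →
      ∀ (r : Fin (N + 1)) (i j : Fin n), i ∈ τ r → j ∈ τ r → i ≠ j →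
      (∑ s : Finset (Fin n),
          if s ⊆ τ r ∧ i ∈ s ∧ j ∈ τ r \ s then
            (List.ofFn fun c : Fin (N + 2) =>
              DS D n a ((refine τ r s (τ r \ s)) c)).prod
          else 0) =
      (∑ s : Finset (Fin n),
          if s ⊆ τ r ∧ j ∈ s ∧ i ∈ τ r \ s then
            (List.ofFn fun c : Fin (N + 2) =>
              DS D n a ((refine τ r s (τ r \ s)) c)).prod
          else 0) := by
  intro n a N τ hne hdisj hcover r i j hi hj hij
  classical
  have hr1 : (r : ℕ) + 1 < N + 2 := by have := r.isLt; omega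
  have hval1 : ∀ (s1 s2 : Finset (Fin n)) (h : (r : ℕ) < N + 2),
      refine τ r s1 s2 ⟨(r : ℕ), h⟩ = s1 := by
    intro s1 s2 h
    simp [refine]
  have hval2 : ∀ (s1 s2 : Finset (Fin n)) (h : (r : ℕ) + 1 < N + 2),
      refine τ r s1 s2 ⟨(r : ℕ) + 1, h⟩ = s2 := by
    intro s1 s2 h
    simp [refine]
  set T1 : Module.End k F :=
    ((List.ofFn fun c : Fin (N + 2) => DS D n a (refine τ r ∅ ∅ c)).take (r : ℕ)).prod with hT1
  set T2 : Module.End k F :=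
    ((List.ofFn fun c : Fin (N + 2) => DS D n a (refine τ r ∅ ∅ c)).drop ((r : ℕ) + 2)).prod with hT2
  have hsplit : ∀ s1 s2 : Finset (Fin n),
      (List.ofFn fun c : Fin (N + 2) => DS D n a (refine τ r s1 s2 c)).prod
        = T1 * (DS D n a s1 * (DS D n a s2 * T2)) := by
    intro s1 s2
    rw [prod_ofFn_split _ (r : ℕ) hr1]
    rw [take_ofFn_congr (fun c : Fin (N + 2) => DS D n a (refine τ r s1 s2 c))
      (fun c => DS D n a (refine τ r ∅ ∅ c)) (r : ℕ)
      (fun c hc => by simp only [refine, dif_pos hc])]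
    rw [drop_ofFn_congr (fun c : Fin (N + 2) => DS D n a (refine τ r s1 s2 c))
      (fun c => DS D n a (refine τ r ∅ ∅ c)) ((r : ℕ) + 2)
      (fun c hc => by
        simp only [refine]
        rw [dif_neg (by omega), if_neg (by omega), if_neg (by omega),
          dif_neg (by omega), if_neg (by omega), if_neg (by omega)])]
    rw [hval1, hval2, ← hT1, ← hT2]
  have side : ∀ (x y : Fin n),
      (∑ s : Finset (Fin n),
          if s ⊆ τ r ∧ x ∈ s ∧ y ∈ τ r \ s then
            (List.ofFn fun c : Fin (N + 2) =>
              DS D n a ((refine τ r s (τ r \ s)) c)).prod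
          else 0)
        = T1 * ((∑ s : Finset (Fin n),
            if s ⊆ τ r ∧ x ∈ s ∧ y ∈ τ r \ s then
              DS D n a s * DS D n a (τ r \ s) else 0) * T2) := by
    intro x y
    rw [Finset.sum_mul, Finset.mul_sum]
    refine Finset.sum_congr rfl fun s _ => ?_
    rw [hsplit s (τ r \ s)]
    split
    · simp only [mul_assoc]
    · simp
  rw [side i j, side j i, key_sum D hquad a (τ r) i j hi hj hij]
end

section
/- Let k be a field of characteristic zero, F a finite-dimensional k-vector space, and for each n ≥ 1 and each tuple (a_1,...,a_n) of indices from a finite set I, let Δ(a_1,...,a_n) ∈ End F be symmetric in its arguments. Set B = ∑_{n≥1} ∑_{(a_1,...,a_n)} (x^{a_n}···x^{a_1}/n!) · Δ(a_1,...,a_n) as a formal power series in commuting variables (x^a)_{a∈I} with End F coefficients. Then the equation dB ∧ dB = 0 (i.e., ∂_a B · ∂_b B = ∂_b B · ∂_a B in End F ⊗ k[[x]] for all a, b ∈ I) is equivalent to the family of quadratic relations: for all n, all (a_1,...,a_n), and all i ≠ j ∈ {1,...,n}, ∑_{σ: iσj} Δ((a_k)_{k∈σ_1})·Δ((a_k)_{k∈σ_2})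 = ∑_{σ: jσi} Δ((a_k)_{k∈σ_1})·Δ((a_k)_{k∈σ_2}), where σ runs over 2-partitions of {1,...,n}. -/
/-- The formal partial derivative `∂_a` of a multivariate power series. -/
noncomputable def pd {I : Type} [DecidableEq I] {A : Type} [Ring A]
    (a : I) (B : MvPowerSeries I A) : MvPowerSeries I A :=
  fun d => (d a + 1) • MvPowerSeries.coeff (d + Finsupp.single a 1) B

open Finset

theorem coeff_pd {I : Type} [DecidableEq I] {A : Type} [Ring A] (a : I) (B : MvPowerSeries I A)
    (d : I →₀ ℕ) : MvPowerSeries.coeff d (pd a B) =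
      (d a + 1) • MvPowerSeries.coeff (d + Finsupp.single a 1) B := rfl

/-! ### Value counts of tuples on finsets -/

noncomputable def cnt {α I : Type} [DecidableEq I] (a : α → I) (s : Finset α) : I →₀ ℕ :=
  ∑ t ∈ s, Finsupp.single (a t) 1

theorem cnt_insert {α I : Type} [DecidableEq α] [DecidableEq I] (a : α → I) {x : α}
    {s : Finset α} (hx : x ∉ s) : cnt a (insert x s) = Finsupp.single (a x) 1 + cnt a s :=
  Finset.sum_insert hx

theorem cnt_add_sdiff {α I : Type} [DecidableEq α] [DecidableEq I] (a : α → I)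
    {t U : Finset α} (h : t ⊆ U) : cnt a t + cnt a (U \ t) = cnt a U := by
  rw [cnt, cnt, cnt, ← Finset.sum_sdiff h, add_comm]

theorem cnt_toMultiset {α I : Type} [DecidableEq I] (a : α → I) (s : Finset α) :
    (cnt a s).toMultiset = s.val.map a := by
  induction s using Finset.cons_induction with
  | empty => simp [cnt]
  | cons x s hx ih => rw [cnt, Finset.sum_cons, Finsupp.toMultiset_add, ← cnt, ih]; simp

theorem cnt_len {α I : Type} [DecidableEq I] (a : α → I) (s : Finset α) :
    (cnt a s).toMultiset.toList.length = s.card := by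
  rw [Multiset.length_toList, cnt_toMultiset, Multiset.card_map]; rfl

theorem cnt_ne_zero {α I : Type} [DecidableEq I] (a : α → I) {s : Finset α} (hs : s.Nonempty) :
    cnt a s ≠ 0 := by
  intro h
  have h2 := cnt_toMultiset a s
  rw [h] at h2
  simp only [Finsupp.toMultiset_zero] at h2
  obtain ⟨x, hx⟩ := hs
  have : a x ∈ (0 : Multiset I) := h2 ▸ Multiset.mem_map_of_mem a hx
  simp at this

/-! ### Tuples with equal value multisets differ by a permutation -/

theorem ofFn_orderIso {I : Type} {n : ℕ} (a : Fin n → I) (s : Finset (Fin n)) :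
    (↑(List.ofFn (fun t => a (s.orderIsoOfFin rfl t).val)) : Multiset I) = s.val.map a := by
  have h1 : (List.ofFn (fun t => a (s.orderIsoOfFin rfl t).val)) =
      (List.ofFn (fun t => ((s.orderIsoOfFin rfl t : Fin n)))).map a := by
    rw [List.map_ofFn]; rfl
  rw [h1, ← Multiset.map_coe]
  congr 1
  rw [List.ofFn_eq_map, ← Multiset.map_coe]
  have h2 : (↑(List.finRange s.card) : Multiset (Fin s.card)) =
      (univ : Finset (Fin s.card)).val := by
    simp [Fin.univ_def]
  rw [h2]
  have h3 : Multiset.map (fun t => ((s.orderIsoOfFin rfl t : Fin n)))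
        (univ : Finset (Fin s.card)).val
      = Multiset.map Subtype.val
          (Multiset.map (s.orderIsoOfFin rfl) (univ : Finset (Fin s.card)).val) := by
    rw [Multiset.map_map]; rfl
  rw [h3]
  have h4 : Multiset.map (s.orderIsoOfFin rfl) (univ : Finset (Fin s.card)).val
      = (univ : Finset {x // x ∈ s}).val := by
    have := Finset.map_univ_equiv (s.orderIsoOfFin rfl).toEquiv
    rw [← this]; rfl
  rw [h4, Finset.univ_eq_attach]
  calc Multiset.map Subtype.val s.attach.val
      = (s.attach.map (Function.Embedding.subtype _)).val := rfl
    _ = s.val := by rw [Finset.attach_map_val]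

theorem exists_perm_comp {α : Type} {n : ℕ} (f g : Fin n → α)
    (h : (↑(List.ofFn f) : Multiset α) = ↑(List.ofFn g)) :
    ∃ σ : Equiv.Perm (Fin n), f = g ∘ σ := by
  letI : LinearOrder α := IsWellOrder.linearOrder WellOrderingRel
  have hp : (List.ofFn f).Perm (List.ofFn g) := Multiset.coe_eq_coe.mp h
  have h1 : List.ofFn (f ∘ Tuple.sort f) = List.ofFn (g ∘ Tuple.sort g) := by
    refine List.Perm.eq_of_sortedLE (Tuple.monotone_sort f).sortedLE_ofFn
      (Tuple.monotone_sort g).sortedLE_ofFn ?_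
    exact ((Tuple.sort f).ofFn_comp_perm f).trans (hp.trans ((Tuple.sort g).ofFn_comp_perm g).symm)
  have h2 : f ∘ Tuple.sort f = g ∘ Tuple.sort g := List.ofFn_inj.mp h1
  refine ⟨(Tuple.sort f).symm.trans (Tuple.sort g), funext fun i => ?_⟩
  have := congrFun h2 ((Tuple.sort f).symm i)
  simpa using this

theorem D_congr {k F I : Type} [Field k] [AddCommGroup F] [Module k F]
    (D : ∀ n, (Fin n → I) → Module.End k F)
    (hsym : ∀ (n : ℕ) (a : Fin n → I) (s : Equiv.Perm (Fin n)), D n (a ∘ s) = D n a)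
    {n₁ n₂ : ℕ} (h : n₁ = n₂) (f : Fin n₁ → I) (g : Fin n₂ → I)
    (hm : (↑(List.ofFn f) : Multiset I) = ↑(List.ofFn (fun t => g (Fin.cast h t)))) :
    D n₁ f = D n₂ g := by
  subst h
  obtain ⟨σ, rfl⟩ := exists_perm_comp f g hm
  exact hsym _ g σ

theorem DS_eq {k F I : Type} [Field k] [AddCommGroup F] [Module k F] [Fintype I] [DecidableEq I]
    (D : ∀ n, (Fin n → I) → Module.End k F)
    (hsym : ∀ (n : ℕ) (a : Fin n → I) (s : Equiv.Perm (Fin n)), D n (a ∘ s) = D n a)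
    (B : MvPowerSeries I (Module.End k F))
    (hB : ∀ d : I →₀ ℕ, d ≠ 0 →
      (d.prod fun _ m => m.factorial) • MvPowerSeries.coeff d B =
        D d.toMultiset.toList.length (fun t => d.toMultiset.toList.get t))
    {n : ℕ} (a : Fin n → I) {s : Finset (Fin n)} (hs : s.Nonempty) :
    DS D n a s =
      (∏ c : I, ((cnt a s) c).factorial) • MvPowerSeries.coeff (cnt a s) B := by
  have h := hB (cnt a s) (cnt_ne_zero a hs)
  rw [Finsupp.prod_fintype _ _ (fun _ => rfl)] at h
  rw [h, DS]
  refine D_congr D hsym (cnt_len a s).symm _ _ ?_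
  rw [ofFn_orderIso]
  have h2 : (List.ofFn fun t => (cnt a s).toMultiset.toList.get
      (Fin.cast (cnt_len a s).symm t)) = (cnt a s).toMultiset.toList := by
    rw [← List.ofFn_congr (cnt_len a s) ((cnt a s).toMultiset.toList.get), List.ofFn_get]
  rw [h2, Multiset.coe_toList, cnt_toMultiset]

/-! ### Counting subsets by value count -/

theorem count_fiber {α I : Type} [DecidableEq α] [DecidableEq I] [Fintype I]
    (a : α → I) (s : Finset α) (d1 : I →₀ ℕ) :
    ((s.powerset.filter fun t => cnt a t = d1)).card = ∏ c : I, ((cnt a s) c).choose (d1 c) := by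
  classical
  induction s using Finset.induction_on generalizing d1 with
  | empty =>
      rw [Finset.powerset_empty, Finset.filter_singleton]
      by_cases h : cnt a ∅ = d1
      · have hd : d1 = 0 := h ▸ rfl
        subst hd
        simp [h]
      · have hd : d1 ≠ 0 := fun hh => h (hh ▸ (by simp [cnt] : cnt a (∅:Finset α) = 0))
        obtain ⟨c, hc⟩ := Finsupp.ne_iff.mp hd
        rw [if_neg h]
        refine (Finset.prod_eq_zero (Finset.mem_univ c) ?_).symm
        simp only [cnt, Finset.sum_empty, Finsupp.coe_zero, Pi.zero_apply]
        simp only [Finsupp.coe_zero, Pi.zero_apply] at hc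
        exact Nat.choose_eq_zero_of_lt (Nat.pos_of_ne_zero fun hh => hc hh)
  | @insert x s hx ih =>
      rw [Finset.powerset_insert, Finset.filter_union]
      have hdisj : Disjoint (s.powerset.filter fun t => cnt a t = d1)
          ((s.powerset.image (insert x)).filter fun t => cnt a t = d1) := by
        rw [Finset.disjoint_left]
        intro t ht1 ht2
        obtain ⟨ht1, -⟩ := Finset.mem_filter.mp ht1
        obtain ⟨ht2, -⟩ := Finset.mem_filter.mp ht2
        obtain ⟨u, hu, rfl⟩ := Finset.mem_image.mp ht2
        exact hx (Finset.mem_powerset.mp ht1 (Finset.mem_insert_self x u))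
      rw [Finset.card_union_of_disjoint hdisj]
      have himg : ((s.powerset.image (insert x)).filter fun t => cnt a t = d1) =
          ((s.powerset.filter fun u => Finsupp.single (a x) 1 + cnt a u = d1).image (insert x)) := by
        rw [Finset.filter_image]
        congr 1
        refine Finset.filter_congr fun u hu => ?_
        show (cnt a (insert x u) = d1) ↔ _
        have hxu : x ∉ u := fun hc => hx (Finset.mem_powerset.mp hu hc)
        rw [cnt_insert a hxu]
      have hinj : Set.InjOn (insert x) (s.powerset : Set (Finset α)) := by
        intro u hu v hv huv
        have hxu : x ∉ u := fun hc => hx (Finset.mem_powerset.mp (Finset.mem_coe.mp hu) hc)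
        have hxv : x ∉ v := fun hc => hx (Finset.mem_powerset.mp (Finset.mem_coe.mp hv) hc)
        rw [← Finset.erase_insert hxu, ← Finset.erase_insert hxv, huv]
      rw [himg, Finset.card_image_of_injOn (hinj.mono
        (by intro u hu; exact Finset.mem_coe.mpr (Finset.mem_of_mem_filter u hu)))]
      rw [cnt_insert a hx]
      by_cases h0 : d1 (a x) = 0
      · have hempty : (s.powerset.filter fun u => Finsupp.single (a x) 1 + cnt a u = d1) = ∅ := by
          refine Finset.filter_false_of_mem fun u hu => ?_
          intro hc
          have := DFunLike.congr_fun hc (a x)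
          simp [h0] at this
        rw [hempty, Finset.card_empty, add_zero, ih d1]
        refine Finset.prod_congr rfl fun c _ => ?_
        rcases eq_or_ne c (a x) with rfl | hc
        · rw [h0]; simp
        · simp [Finsupp.single_apply, Ne.symm hc]
      · set d1' := d1 - Finsupp.single (a x) 1 with hd1'
        have hd1 : d1 = Finsupp.single (a x) 1 + d1' := by
          ext c
          rcases eq_or_ne c (a x) with rfl | hc
          · simp [hd1', Finsupp.single_apply]
            omega
          · simp [hd1', Finsupp.single_apply, Ne.symm hc]
        have hcond : (s.powerset.filter fun u => Finsupp.single (a x) 1 + cnt a u = d1) =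
            (s.powerset.filter fun u => cnt a u = d1') := by
          refine Finset.filter_congr fun u _ => ?_
          rw [hd1]
          exact ⟨fun h => add_left_cancel h, fun h => by rw [h]⟩
        rw [hcond, ih d1, ih d1']
        rw [← Finset.mul_prod_erase univ _ (Finset.mem_univ (a x)),
            ← Finset.mul_prod_erase univ _ (Finset.mem_univ (a x)),
            ← Finset.mul_prod_erase univ _ (Finset.mem_univ (a x))]
        have hprod : ∏ c ∈ univ.erase (a x), ((cnt a s) c).choose (d1' c) =
            ∏ c ∈ univ.erase (a x), ((cnt a s) c).choose (d1 c) := by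
          refine Finset.prod_congr rfl fun c hc => ?_
          have : d1' c = d1 c := by
            simp [hd1', Finsupp.single_apply, Ne.symm (Finset.ne_of_mem_erase hc)]
          rw [this]
        have hpoint : ∏ c ∈ univ.erase (a x),
            (((Finsupp.single (a x) 1 + cnt a s) : I →₀ ℕ) c).choose (d1 c) =
            ∏ c ∈ univ.erase (a x), ((cnt a s) c).choose (d1 c) := by
          refine Finset.prod_congr rfl fun c hc => ?_
          simp [Finsupp.single_apply, Ne.symm (Finset.ne_of_mem_erase hc)]
        rw [hprod, hpoint, ← add_mul]
        congr 1
        obtain ⟨m, hm⟩ := Nat.exists_eq_succ_of_ne_zero h0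
        have h1 : ((Finsupp.single (a x) 1 + cnt a s : I →₀ ℕ)) (a x) = (cnt a s) (a x) + 1 := by
          simp [Finsupp.single_apply, add_comm]
        have h2 : d1' (a x) = m := by simp [hd1', hm, Finsupp.single_apply]
        rw [h1, h2, hm, Nat.choose_succ_succ, add_comm]

/-! ### Scalar arithmetic -/

theorem fact_prod_shift {I : Type} [Fintype I] [DecidableEq I] (γ : I) (e : I →₀ ℕ) :
    ∏ c : I, ((e + Finsupp.single γ 1 : I →₀ ℕ) c).factorial
      = (e γ + 1) * ∏ c : I, (e c).factorial := by
  rw [← Finset.mul_prod_erase univ (fun c => ((e + Finsupp.single γ 1 : I →₀ ℕ) c).factorial)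
    (Finset.mem_univ γ), ← Finset.mul_prod_erase univ (fun c => (e c).factorial) (Finset.mem_univ γ)]
  have h1 : ((e + Finsupp.single γ 1 : I →₀ ℕ) γ) = e γ + 1 := by simp
  have h2 : ∏ c ∈ univ.erase γ, ((e + Finsupp.single γ 1 : I →₀ ℕ) c).factorial
      = ∏ c ∈ univ.erase γ, (e c).factorial := by
    refine Finset.prod_congr rfl fun c hc => ?_
    simp [Finsupp.single_apply, Ne.symm (Finset.ne_of_mem_erase hc)]
  rw [h1, h2, Nat.factorial_succ, mul_assoc]

theorem key_scalar {I : Type} [Fintype I] [DecidableEq I] (αx βx : I) (d1 d2 : I →₀ ℕ) :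
    (∏ c : I, ((d1 + d2 : I →₀ ℕ) c).choose (d1 c)) *
      ((∏ c : I, ((d1 + Finsupp.single αx 1 : I →₀ ℕ) c).factorial) *
       (∏ c : I, ((d2 + Finsupp.single βx 1 : I →₀ ℕ) c).factorial))
    = (∏ c : I, ((d1 + d2 : I →₀ ℕ) c).factorial) * ((d1 αx + 1) * (d2 βx + 1)) := by
  rw [fact_prod_shift αx d1, fact_prod_shift βx d2]
  have hc : (∏ c : I, ((d1 + d2 : I →₀ ℕ) c).choose (d1 c)) *
      ((∏ c : I, (d1 c).factorial) * (∏ c : I, (d2 c).factorial))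
      = ∏ c : I, ((d1 + d2 : I →₀ ℕ) c).factorial := by
    rw [← Finset.prod_mul_distrib, ← Finset.prod_mul_distrib]
    refine Finset.prod_congr rfl fun c _ => ?_
    have h : ((d1 + d2 : I →₀ ℕ) c) = d1 c + d2 c := rfl
    rw [h, ← mul_assoc]
    have h2 := Nat.choose_mul_factorial_mul_factorial (Nat.le_add_right (d1 c) (d2 c))
    rwa [Nat.add_sub_cancel_left] at h2
  rw [← hc]; ring

/-! ### The bridge lemma -/

theorem bridge {k F I : Type} [Field k] [AddCommGroup F] [Module k F] [Fintype I] [DecidableEq I]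
    (D : ∀ n, (Fin n → I) → Module.End k F)
    (hsym : ∀ (n : ℕ) (a : Fin n → I) (s : Equiv.Perm (Fin n)), D n (a ∘ s) = D n a)
    (B : MvPowerSeries I (Module.End k F))
    (hB : ∀ d : I →₀ ℕ, d ≠ 0 →
      (d.prod fun _ m => m.factorial) • MvPowerSeries.coeff d B =
        D d.toMultiset.toList.length (fun t => d.toMultiset.toList.get t))
    {n : ℕ} (a : Fin n → I) (i j : Fin n) (hij : i ≠ j) :
    (∑ s : Finset (Fin n), if i ∈ s ∧ j ∉ s then DS D n a s * DS D n a sᶜ else 0)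
    = (∏ c : I, ((cnt a ({i, j}ᶜ : Finset (Fin n))) c).factorial) •
        MvPowerSeries.coeff (cnt a ({i, j}ᶜ : Finset (Fin n)))
          (pd (a i) B * pd (a j) B) := by
  classical
  set U : Finset (Fin n) := {i, j}ᶜ with hU
  set d : I →₀ ℕ := cnt a U with hd
  have hiU : i ∉ U := by simp [hU]
  have hjU : j ∉ U := by simp [hU]
  set Hf : (I →₀ ℕ) × (I →₀ ℕ) → Module.End k F := fun p =>
    ((∏ c : I, ((p.1 + Finsupp.single (a i) 1 : I →₀ ℕ) c).factorial) *
     (∏ c : I, ((p.2 + Finsupp.single (a j) 1 : I →₀ ℕ) c).factorial)) •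
      (MvPowerSeries.coeff (p.1 + Finsupp.single (a i) 1) B *
       MvPowerSeries.coeff (p.2 + Finsupp.single (a j) 1) B) with hHf
  have step1 : (∑ s : Finset (Fin n), if i ∈ s ∧ j ∉ s then DS D n a s * DS D n a sᶜ else 0)
      = ∑ t ∈ U.powerset, (DS D n a (insert i t) * DS D n a (insert i t)ᶜ) := by
    rw [← Finset.sum_filter]
    refine Finset.sum_bij' (fun s _ => s.erase i) (fun t _ => insert i t) ?_ ?_ ?_ ?_ ?_
    · intro s hs
      have hmem := Finset.mem_filter.mp hs
      have his := hmem.2.1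
      have hjs := hmem.2.2
      rw [Finset.mem_powerset]
      intro z hz
      obtain ⟨hzi, hzs⟩ := Finset.mem_erase.mp hz
      have hzj : z ≠ j := fun hc => hjs (hc ▸ hzs)
      simp [hU, hzi, hzj]
    · intro t ht
      have htU : t ⊆ U := Finset.mem_powerset.mp ht
      have hjt : j ∉ t := fun hc => hjU (htU hc)
      refine Finset.mem_filter.mpr ⟨Finset.mem_univ _, Finset.mem_insert_self i t, ?_⟩
      intro hc
      rcases Finset.mem_insert.mp hc with h | h
      · exact hij h.symm
      · exact hjt h
    · intro s hs
      exact Finset.insert_erase (Finset.mem_filter.mp hs).2.1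
    · intro t ht
      have htU : t ⊆ U := Finset.mem_powerset.mp ht
      exact Finset.erase_insert (fun hc => hiU (htU hc))
    · intro s hs
      rw [Finset.insert_erase (Finset.mem_filter.mp hs).2.1]
  have hterm : ∀ t ∈ U.powerset, DS D n a (insert i t) * DS D n a (insert i t)ᶜ
      = Hf (cnt a t, cnt a (U \ t)) := by
    intro t ht
    have htU : t ⊆ U := Finset.mem_powerset.mp ht
    have hit : i ∉ t := fun hc => hiU (htU hc)
    have hjUt : j ∉ U \ t := fun hc => hjU (Finset.mem_sdiff.mp hc).1
    have hcompl : (insert i t)ᶜ = insert j (U \ t) := by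
      ext z
      have hzt : z ∈ t → (z ≠ i ∧ z ≠ j) := by
        intro hz
        have := htU hz
        rw [hU] at this
        simp only [Finset.mem_compl, Finset.mem_insert, Finset.mem_singleton] at this
        tauto
      have hzij : ¬(z = i ∧ z = j) := fun h => hij (h.1.symm.trans h.2)
      simp only [Finset.mem_compl, Finset.mem_insert, Finset.mem_sdiff, hU,
        Finset.mem_singleton]
      tauto
    rw [hcompl, DS_eq D hsym B hB a (Finset.insert_nonempty i t),
      DS_eq D hsym B hB a (Finset.insert_nonempty j (U \ t)),
      cnt_insert a hit, cnt_insert a hjUt,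
      add_comm (Finsupp.single (a i) 1) (cnt a t),
      add_comm (Finsupp.single (a j) 1) (cnt a (U \ t)),
      smul_mul_assoc, mul_smul_comm, smul_smul, hHf]
  have hmaps : ∀ t ∈ U.powerset, (cnt a t, cnt a (U \ t)) ∈ Finset.HasAntidiagonal.antidiagonal d := by
    intro t ht
    rw [Finset.HasAntidiagonal.mem_antidiagonal]
    exact cnt_add_sdiff a (Finset.mem_powerset.mp ht)
  calc (∑ s : Finset (Fin n), if i ∈ s ∧ j ∉ s then DS D n a s * DS D n a sᶜ else 0)
      = ∑ t ∈ U.powerset, (DS D n a (insert i t) * DS D n a (insert i t)ᶜ) := step1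
    _ = ∑ t ∈ U.powerset, Hf (cnt a t, cnt a (U \ t)) := Finset.sum_congr rfl hterm
    _ = ∑ p ∈ Finset.HasAntidiagonal.antidiagonal d,
          ∑ t ∈ U.powerset.filter (fun t => (cnt a t, cnt a (U \ t)) = p),
            Hf (cnt a t, cnt a (U \ t)) :=
        (Finset.sum_fiberwise_of_maps_to hmaps _).symm
    _ = ∑ p ∈ Finset.HasAntidiagonal.antidiagonal d, (∏ c : I, (d c).choose (p.1 c)) • Hf p := by
        refine Finset.sum_congr rfl fun p hp => ?_
        have hp' : p.1 + p.2 = d := Finset.HasAntidiagonal.mem_antidiagonal.mp hp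
        have hfil : U.powerset.filter (fun t => (cnt a t, cnt a (U \ t)) = p)
            = U.powerset.filter (fun t => cnt a t = p.1) := by
          refine Finset.filter_congr fun t ht => ?_
          constructor
          · intro hh
            exact congrArg Prod.fst hh
          · intro hh
            have h3 := cnt_add_sdiff a (Finset.mem_powerset.mp ht)
            rw [hh, ← hd] at h3
            have h4 : cnt a (U \ t) = p.2 := add_left_cancel (h3.trans hp'.symm)
            rw [hh, h4]
        calc ∑ t ∈ U.powerset.filter (fun t => (cnt a t, cnt a (U \ t)) = p),
              Hf (cnt a t, cnt a (U \ t))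
            = ∑ t ∈ U.powerset.filter (fun t => (cnt a t, cnt a (U \ t)) = p), Hf p :=
              Finset.sum_congr rfl fun t ht => by rw [(Finset.mem_filter.mp ht).2]
          _ = (U.powerset.filter (fun t => (cnt a t, cnt a (U \ t)) = p)).card • Hf p :=
              Finset.sum_const _
          _ = (∏ c : I, (d c).choose (p.1 c)) • Hf p := by
              rw [hfil, count_fiber, ← hd]
    _ = (∏ c : I, (d c).factorial) •
          MvPowerSeries.coeff d (pd (a i) B * pd (a j) B) := by
        rw [MvPowerSeries.coeff_mul, Finset.smul_sum]
        refine Finset.sum_congr rfl fun p hp => ?_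
        have hp' : p.1 + p.2 = d := Finset.HasAntidiagonal.mem_antidiagonal.mp hp
        rw [coeff_pd, coeff_pd, smul_mul_assoc, mul_smul_comm, smul_smul, smul_smul, smul_smul]
        congr 1
        rw [← hp', key_scalar (a i) (a j) p.1 p.2]
        ring

/-! ### Reconstructing a tuple from a monomial -/

theorem sum_single_list {I : Type} [DecidableEq I] (l : List I) :
    ∑ t : Fin l.length, Finsupp.single (l.get t) 1 = (↑l : Multiset I).toFinsupp := by
  induction l with
  | nil => simp
  | cons x xs ih =>
      show (∑ t : Fin (xs.length + 1), Finsupp.single ((x :: xs).get t) 1) = _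
      rw [Fin.sum_univ_succ]
      have h1 : (↑(x :: xs) : Multiset I) = {x} + ↑xs := by
        rw [← Multiset.cons_coe, ← Multiset.singleton_add]
      rw [h1, map_add, Multiset.toFinsupp_singleton, ← ih]
      rfl

theorem sum_single_toList {I : Type} [DecidableEq I] (d : I →₀ ℕ) :
    ∑ t : Fin d.toMultiset.toList.length, Finsupp.single (d.toMultiset.toList.get t) 1 = d := by
  rw [sum_single_list, Multiset.coe_toList, Finsupp.toMultiset_toFinsupp]

theorem nsmul_cancel {k F : Type} [Field k] [CharZero k] [AddCommGroup F] [Module k F]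
    {N : ℕ} (hN : N ≠ 0) {u v : F} (h : N • u = N • v) : u = v := by
  have h1 : (N : k) • u = (N : k) • v := by
    rw [Nat.cast_smul_eq_nsmul, Nat.cast_smul_eq_nsmul]; exact h
  exact smul_right_injective F (Nat.cast_ne_zero.mpr hN) h1

/-- Main theorem. -/
theorem stmt_19 {k F I : Type} [Field k] [CharZero k] [AddCommGroup F] [Module k F]
    [FiniteDimensional k F] [Fintype I] [DecidableEq I]
    (D : ∀ n, (Fin n → I) → Module.End k F)
    (hsym : ∀ (n : ℕ) (a : Fin n → I) (s : Equiv.Perm (Fin n)), D n (a ∘ s) = D n a)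
    (B : MvPowerSeries I (Module.End k F))
    (hB0 : MvPowerSeries.coeff 0 B = 0)
    (hB : ∀ d : I →₀ ℕ, d ≠ 0 →
      (d.prod fun _ m => m.factorial) • MvPowerSeries.coeff d B =
        D d.toMultiset.toList.length (fun t => d.toMultiset.toList.get t)) :
    (∀ a b : I, pd a B * pd b B = pd b B * pd a B) ↔
    (∀ (n : ℕ) (a : Fin n → I) (i j : Fin n), i ≠ j →
      (∑ s : Finset (Fin n),
          if i ∈ s ∧ j ∉ s then DS D n a s * DS D n a sᶜ else 0) =
      (∑ s : Finset (Fin n),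
          if j ∈ s ∧ i ∉ s then DS D n a s * DS D n a sᶜ else 0)) := by
  constructor
  · intro h n a i j hij
    rw [bridge D hsym B hB a i j hij, bridge D hsym B hB a j i hij.symm,
      Finset.pair_comm j i, h (a i) (a j)]
  · intro h a b
    refine MvPowerSeries.ext fun d => ?_
    set L := d.toMultiset.toList with hL
    set m := L.length with hm
    set f : Fin (m + 2) → I := Fin.cons a (Fin.cons b fun t => L.get t) with hf
    have h01 : (0 : Fin (m + 2)) ≠ 1 := by
      simp [Fin.ext_iff]
    have hcompl : ({(0 : Fin (m + 2)), 1}ᶜ : Finset (Fin (m + 2)))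
        = Finset.univ.image (fun t : Fin m => t.succ.succ) := by
      ext z
      simp only [Finset.mem_compl, Finset.mem_insert, Finset.mem_singleton, Finset.mem_image,
        Finset.mem_univ, true_and]
      constructor
      · rintro hz
        push_neg at hz
        obtain ⟨hz0, hz1⟩ := hz
        obtain ⟨w, rfl⟩ := Fin.eq_succ_of_ne_zero hz0
        have hw0 : w ≠ 0 := by
          rintro rfl
          exact hz1 (Fin.succ_zero_eq_one)
        obtain ⟨v, rfl⟩ := Fin.eq_succ_of_ne_zero hw0
        exact ⟨v, rfl⟩
      · rintro ⟨t, rfl⟩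
        push_neg
        exact ⟨Fin.succ_ne_zero _, Fin.succ_succ_ne_one t⟩
    have hcnt : cnt f ({(0 : Fin (m + 2)), 1}ᶜ : Finset (Fin (m + 2))) = d := by
      rw [hcompl, cnt, Finset.sum_image
        (fun u _ v _ huv => Fin.succ_injective _ (Fin.succ_injective _ huv))]
      have hfs : ∀ t : Fin m, f t.succ.succ = L.get t := fun t => by
        rw [hf, Fin.cons_succ, Fin.cons_succ]
      calc ∑ t : Fin m, Finsupp.single (f t.succ.succ) 1
          = ∑ t : Fin m, Finsupp.single (L.get t) 1 :=
            Finset.sum_congr rfl fun t _ => by rw [hfs t]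
        _ = d := sum_single_toList d
    have hf0 : f 0 = a := by rw [hf, Fin.cons_zero]
    have hf1 : f 1 = b := by
      rw [hf, ← Fin.succ_zero_eq_one, Fin.cons_succ, Fin.cons_zero]
    have hq := h (m + 2) f 0 1 h01
    rw [bridge D hsym B hB f 0 1 h01, bridge D hsym B hB f 1 0 h01.symm,
      Finset.pair_comm 1 0, hcnt, hf0, hf1] at hq
    have hNpos : 0 < ∏ c : I, (d c).factorial :=
      Finset.prod_pos fun c _ => Nat.factorial_pos _
    exact nsmul_cancel (k := k) hNpos.ne' hq
end
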